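/- arXiv:1001.2477 — 6 statements merged into one kernel-verified Lean document; each statement's English description precedes it below -/
import Mathlib

section
/- For the function R(z) = (z/e)^z √(2πz) / Γ(z+1) defined for z > 0, we have 0 < R(z) < 1 for all z > 0, and R(z) → 1 as z → ∞. -/
open MeasureTheory Set Filter

noncomputable def stirlingRatio (z : ℝ) : ℝ :=
  (z / Real.exp 1) ^ z * Real.sqrt (2 * Real.pi * z) / Real.Gamma (z + 1)

namespace StirlingAux
open Real

noncomputable def fS (x : ℝ) : ℝ :=
  Real.log (Real.Gamma (x+1)) - (x * Real.log x - x + (1/2) * Real.log (2*Real.pi*x))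

lemma ratio_eq {z : ℝ} (hz : 0 < z) : stirlingRatio z = Real.exp (-(fS z)) := by
  have hze : 0 < z / Real.exp 1 := div_pos hz (Real.exp_pos 1)
  have h2pz : 0 < 2 * Real.pi * z := by positivity
  have hG : 0 < Real.Gamma (z+1) := Real.Gamma_pos_of_pos (by linarith)
  unfold stirlingRatio
  rw [Real.rpow_def_of_pos hze, Real.sqrt_eq_rpow, Real.rpow_def_of_pos h2pz,
    ← Real.exp_log hG, ← Real.exp_add, ← Real.exp_sub]
  congr 1
  rw [Real.log_div (ne_of_gt hz) (Real.exp_ne_zero 1), Real.log_exp]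
  unfold fS
  ring

lemma log_sub_log_le {a b : ℝ} (ha : 0 < a) (hab : a ≤ b) :
    Real.log b - Real.log a ≤ (b - a) / a := by
  have hb : 0 < b := lt_of_lt_of_le ha hab
  have := Real.log_le_sub_one_of_pos (div_pos hb ha)
  rw [Real.log_div hb.ne' ha.ne'] at this
  have h1 : Real.log b - Real.log a ≤ b / a - 1 := this
  calc Real.log b - Real.log a ≤ b/a - 1 := h1
    _ = (b - a)/a := by field_simp

lemma le_log_sub_log {a b : ℝ} (ha : 0 < a) (hab : a ≤ b) :
    (b - a) / b ≤ Real.log b - Real.log a := by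
  have hb : 0 < b := lt_of_lt_of_le ha hab
  have := Real.log_le_sub_one_of_pos (div_pos ha hb)
  rw [Real.log_div ha.ne' hb.ne'] at this
  have h2 : Real.log a - Real.log b ≤ a/b - 1 := this
  have h3 : 1 - a/b ≤ Real.log b - Real.log a := by linarith
  calc (b - a)/b = 1 - a/b := by field_simp
    _ ≤ _ := h3

lemma log_gt_aux {y : ℝ} (hy : 0 < y) : 2*y/(2+y) < Real.log (1+y) := by
  set h : ℝ → ℝ := fun t => Real.log (1+t) - 2*t/(2+t) with hh
  have hd : ∀ t ∈ interior (Set.Ici (0:ℝ)), 0 < deriv h t := by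
    intro t ht
    rw [interior_Ici] at ht
    have ht' : (0:ℝ) < t := ht
    have h1 : HasDerivAt (fun t : ℝ => Real.log (1+t)) (1/(1+t)) t := by
      have := (Real.hasDerivAt_log (by linarith : (1:ℝ)+t ≠ 0)).comp t
        ((hasDerivAt_id t).const_add 1)
      simpa [one_div, Function.comp_def] using this
    have h2 : HasDerivAt (fun t : ℝ => 2*t/(2+t)) (4/(2+t)^2) t := by
      have hne : (2:ℝ)+t ≠ 0 := by linarith
      have := ((hasDerivAt_id t).const_mul 2).div ((hasDerivAt_id t).const_add 2) hne
      refine this.congr_deriv ?_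
      simp only [id]
      ring
    have hD : HasDerivAt h (1/(1+t) - 4/(2+t)^2) t := h1.sub h2
    rw [hD.deriv]
    rw [sub_pos, div_lt_div_iff₀ (by positivity) (by positivity)]
    nlinarith
  have hc : ContinuousOn h (Set.Ici 0) := by
    apply ContinuousOn.sub
    · apply ContinuousOn.log (by fun_prop)
      intro t ht; simp at ht; intro hcon; linarith
    · apply ContinuousOn.div (by fun_prop) (by fun_prop)
      intro t ht; simp at ht; intro hcon; linarith
  have hm : StrictMonoOn h (Set.Ici 0) :=
    strictMonoOn_of_deriv_pos (convex_Ici 0) hc hd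
  have := hm (Set.self_mem_Ici) (Set.mem_Ici.2 hy.le) hy
  simp only [hh] at this
  simp at this
  linarith

lemma g_pos {x : ℝ} (hx : 0 < x) :
    1 < (x + 1/2) * (Real.log (x+1) - Real.log x) := by
  have h1 : Real.log (x+1) - Real.log x = Real.log (1 + 1/x) := by
    rw [← Real.log_div (by linarith) hx.ne']
    congr 1
    field_simp
  rw [h1]
  have hlt := log_gt_aux (y := 1/x) (by positivity)
  have h2 : 2*(1/x)/(2+1/x) = 1/(x+1/2) := by
    rw [div_eq_div_iff (by positivity) (by positivity)]
    field_simp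
  rw [h2] at hlt
  rw [← div_lt_iff₀' (by positivity)]
  linarith

lemma fS_step {x : ℝ} (hx : 0 < x) :
    fS (x+1) = fS x - ((x + 1/2) * (Real.log (x+1) - Real.log x) - 1) := by
  have hG : 0 < Real.Gamma (x+1) := Real.Gamma_pos_of_pos (by linarith)
  have hrec : Real.Gamma (x+1+1) = (x+1) * Real.Gamma (x+1) :=
    Real.Gamma_add_one (by linarith)
  have hlrec : Real.log (Real.Gamma (x+1+1))
      = Real.log (x+1) + Real.log (Real.Gamma (x+1)) := by
    rw [hrec, Real.log_mul (by linarith) hG.ne']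
  have hl1 : Real.log (2*Real.pi*(x+1)) = Real.log (2*Real.pi) + Real.log (x+1) :=
    Real.log_mul (by positivity) (by linarith)
  have hl2 : Real.log (2*Real.pi*x) = Real.log (2*Real.pi) + Real.log x :=
    Real.log_mul (by positivity) hx.ne'
  unfold fS
  rw [hlrec, hl1, hl2]
  ring

lemma logGamma_upper (n : ℕ) (hn : 1 ≤ n) {θ : ℝ} (h0 : 0 ≤ θ) (h1 : θ ≤ 1) :
    Real.log (Real.Gamma ((n:ℝ)+θ+1)) ≤ Real.log (n.factorial) + θ * Real.log (n+1) := by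
  have hN : (1:ℝ) ≤ (n:ℝ) := by exact_mod_cast hn
  have hmem1 : ((n:ℝ)+1) ∈ Set.Ioi (0:ℝ) := by simp; linarith
  have hmem2 : ((n:ℝ)+2) ∈ Set.Ioi (0:ℝ) := by simp; linarith
  have hcx := Real.convexOn_log_Gamma.2 hmem1 hmem2 (by linarith : (0:ℝ) ≤ 1 - θ) h0
    (by ring : (1-θ) + θ = 1)
  have key : (1-θ) • ((n:ℝ)+1) + θ • ((n:ℝ)+2) = (n:ℝ)+θ+1 := by
    simp [smul_eq_mul]; ring
  rw [key] at hcx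
  have hg1 : Real.Gamma ((n:ℝ)+1) = n.factorial := Real.Gamma_nat_eq_factorial n
  have hg2 : Real.Gamma ((n:ℝ)+2) = (n+1).factorial := by
    have := Real.Gamma_nat_eq_factorial (n+1)
    push_cast at this ⊢
    rw [← this]; ring_nf
  have hfact : Real.log ((n+1).factorial) = Real.log (n+1) + Real.log (n.factorial) := by
    rw [Nat.factorial_succ]
    push_cast
    rw [Real.log_mul (by positivity) (by positivity)]
  simp only [Function.comp, smul_eq_mul] at hcx
  rw [hg1, hg2, hfact] at hcx
  push_cast at hcx ⊢
  nlinarith [hcx]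

lemma logGamma_lower (n : ℕ) (hn : 2 ≤ n) {θ : ℝ} (h0 : 0 ≤ θ) (h1 : θ ≤ 1) :
    Real.log (n.factorial) + θ * Real.log n ≤ Real.log (Real.Gamma ((n:ℝ)+θ+1)) := by
  have hN : (2:ℝ) ≤ (n:ℝ) := by exact_mod_cast hn
  have hmem1 : ((n:ℝ)) ∈ Set.Ioi (0:ℝ) := by simp; linarith
  have hmem2 : ((n:ℝ)+θ+1) ∈ Set.Ioi (0:ℝ) := by simp; linarith
  have hb : (0:ℝ) < 1 + θ := by linarith
  have hcx := Real.convexOn_log_Gamma.2 hmem1 hmem2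
    (by positivity : (0:ℝ) ≤ θ/(1+θ)) (by positivity : (0:ℝ) ≤ 1/(1+θ))
    (by field_simp; ring : θ/(1+θ) + 1/(1+θ) = 1)
  have key : (θ/(1+θ)) • ((n:ℝ)) + (1/(1+θ)) • ((n:ℝ)+θ+1) = (n:ℝ)+1 := by
    simp only [smul_eq_mul]
    field_simp
    ring
  rw [key] at hcx
  simp only [Function.comp, smul_eq_mul] at hcx
  obtain ⟨m, rfl⟩ : ∃ m, n = m + 1 := ⟨n - 1, by omega⟩
  have hg1 : Real.Gamma (((m+1:ℕ):ℝ)) = m.factorial := by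
    have := Real.Gamma_nat_eq_factorial m
    push_cast at this ⊢
    rw [← this]
  have hg2 : Real.Gamma (((m+1:ℕ):ℝ)+1) = (m+1).factorial := by
    exact_mod_cast Real.Gamma_nat_eq_factorial (m+1)
  have hfact : Real.log ((m+1).factorial) = Real.log (m+1) + Real.log (m.factorial) := by
    rw [Nat.factorial_succ]
    push_cast
    rw [Real.log_mul (by positivity) (by positivity)]
  rw [hg1] at hcx
  have hgoal : Real.log (Real.Gamma (((m+1:ℕ):ℝ)+1)) = Real.log ((m+1).factorial) := by
    rw [hg2]
  have h2 : Real.log (Real.Gamma (((m+1:ℕ):ℝ)+1))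
      ≤ θ/(1+θ) * Real.log (m.factorial)
        + 1/(1+θ) * Real.log (Real.Gamma (((m+1:ℕ):ℝ)+θ+1)) := hcx
  rw [hgoal, hfact] at h2
  have h3 : (1+θ) * (Real.log (m+1) + Real.log (m.factorial))
      ≤ θ * Real.log (m.factorial) + Real.log (Real.Gamma (((m+1:ℕ):ℝ)+θ+1)) := by
    have hmul := mul_le_mul_of_nonneg_left h2 hb.le
    calc (1+θ) * (Real.log (m+1) + Real.log (m.factorial))
        = (1+θ) * (Real.log ((m:ℝ)+1) + Real.log ↑m.factorial) := by push_cast; ring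
      _ ≤ (1+θ) * (θ/(1+θ) * Real.log (m.factorial)
            + 1/(1+θ) * Real.log (Real.Gamma (((m+1:ℕ):ℝ)+θ+1))) := by
          push_cast at hmul ⊢; exact hmul
      _ = θ * Real.log (m.factorial) + Real.log (Real.Gamma (((m+1:ℕ):ℝ)+θ+1)) := by
          field_simp
  rw [hfact]
  push_cast at h3 ⊢
  nlinarith [h3]

lemma log_factorial (n : ℕ) (hn : 1 ≤ n) :
    Real.log (n.factorial) = Real.log (Stirling.stirlingSeq n)
      + ((1/2)*Real.log 2 + (1/2)*Real.log n + (n:ℝ) * Real.log n - n) := by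
  have hN : (1:ℝ) ≤ (n:ℝ) := by exact_mod_cast hn
  have hs : (0:ℝ) < Real.sqrt (2*(n:ℝ)) := Real.sqrt_pos.2 (by linarith)
  have hp : (0:ℝ) < ((n:ℝ)/Real.exp 1)^n := by positivity
  have hf : (0:ℝ) < (n.factorial : ℝ) := by exact_mod_cast n.factorial_pos
  rw [Stirling.stirlingSeq, Real.log_div hf.ne' (by positivity),
    Real.log_mul hs.ne' hp.ne', Real.log_sqrt (by positivity),
    Real.log_pow, Real.log_div (by linarith) (Real.exp_ne_zero 1), Real.log_exp,
    Real.log_mul (by norm_num) (by linarith)]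
  push_cast
  ring

set_option maxHeartbeats 1600000 in
lemma fS_bound {x : ℝ} (hx : 2 ≤ x) :
    |fS x - (Real.log (Stirling.stirlingSeq ⌊x⌋₊) - (1/2)*Real.log Real.pi)|
      ≤ (1/2)*(Real.log x - Real.log (x-1)) + 2/(x-1) := by
  set n := ⌊x⌋₊ with hn_def
  have hn : 2 ≤ n := Nat.le_floor (by exact_mod_cast hx)
  have hx0 : 0 < x := by linarith
  have hNx : (n:ℝ) ≤ x := Nat.floor_le hx0.le
  have hxN : x < n+1 := Nat.lt_floor_add_one x
  have hN2 : (2:ℝ) ≤ (n:ℝ) := by exact_mod_cast hn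
  have h0 : 0 ≤ x - (n:ℝ) := by linarith
  have h1 : x - (n:ℝ) ≤ 1 := by linarith
  have hup := logGamma_upper n (by omega) h0 h1
  have hlo := logGamma_lower n hn h0 h1
  have harg : (n:ℝ) + (x - (n:ℝ)) + 1 = x + 1 := by ring
  rw [harg] at hup hlo
  have hlf := log_factorial n (by omega)
  have h2px : Real.log (2*Real.pi*x) = Real.log 2 + Real.log Real.pi + Real.log x := by
    rw [Real.log_mul (by positivity) hx0.ne',
      Real.log_mul (by norm_num) Real.pi_ne_zero]
  have hnpos : (0:ℝ) < (n:ℝ) := by linarith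
  have hx1 : (0:ℝ) < x - 1 := by linarith
  have hs1 : (x - (n:ℝ))/x ≤ Real.log x - Real.log n := by
    have := le_log_sub_log hnpos hNx
    linarith [this]
  have hs2 : Real.log x - Real.log n ≤ (x - (n:ℝ))/(n:ℝ) :=
    log_sub_log_le hnpos hNx
  have ht1 : Real.log ((n:ℝ)+1) - Real.log x ≤ ((n:ℝ)+1-x)/x :=
    log_sub_log_le hx0 (by linarith)
  have hlog_nx : Real.log (n:ℝ) ≤ Real.log x := Real.log_le_log hnpos hNx
  have hlog_x1n : Real.log (x-1) ≤ Real.log (n:ℝ) :=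
    Real.log_le_log hx1 (by linarith)
  -- upper bracket estimate
  have keyU : (n:ℝ)*Real.log n + (x - (n:ℝ))*Real.log ((n:ℝ)+1) + (x - (n:ℝ))
      - x*Real.log x ≤ 2/(x-1) := by
    have m1 : (n:ℝ)*((x - (n:ℝ))/x) ≤ (n:ℝ)*(Real.log x - Real.log n) :=
      mul_le_mul_of_nonneg_left hs1 hnpos.le
    have m2 : (x - (n:ℝ))*(Real.log ((n:ℝ)+1) - Real.log x)
        ≤ (x - (n:ℝ))*(((n:ℝ)+1-x)/x) :=
      mul_le_mul_of_nonneg_left ht1 h0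
    have e4 : (x - (n:ℝ)) - (n:ℝ)*((x - (n:ℝ))/x)
        + (x - (n:ℝ))*(((n:ℝ)+1-x)/x) = (x - (n:ℝ))/x := by
      field_simp
      ring
    have e5 : (x - (n:ℝ))/x ≤ 2/(x-1) := by
      rw [div_le_div_iff₀ hx0 hx1]
      nlinarith
    nlinarith [m1, m2]
  -- lower bracket estimate
  have keyL : -(2/(x-1)) ≤ (n:ℝ)*Real.log n + (x - (n:ℝ))*Real.log (n:ℝ)
      + (x - (n:ℝ)) - x*Real.log x := by
    have m1 : x*(Real.log x - Real.log n) ≤ x*((x - (n:ℝ))/(n:ℝ)) :=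
      mul_le_mul_of_nonneg_left hs2 hx0.le
    have h5 : x*((x - (n:ℝ))/(n:ℝ)) ≤ (x - (n:ℝ)) + 1/(n:ℝ) := by
      have e6 : x*((x - (n:ℝ))/(n:ℝ)) = (x - (n:ℝ)) + (x - (n:ℝ))*(x - (n:ℝ))/(n:ℝ) := by
        field_simp
        ring
      have e7 : (x - (n:ℝ))*(x - (n:ℝ))/(n:ℝ) ≤ 1/(n:ℝ) := by
        gcongr
        nlinarith
      linarith
    have h6 : 1/(n:ℝ) ≤ 2/(x-1) := by
      rw [div_le_div_iff₀ hnpos hx1]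
      nlinarith
    nlinarith [m1]
  rw [abs_le]
  constructor
  · rw [hlf] at hlo
    unfold fS
    rw [h2px]
    push_cast at hlo ⊢
    nlinarith [hlo, keyL, hlog_nx, hlog_x1n]
  · rw [hlf] at hup
    unfold fS
    rw [h2px]
    push_cast at hup ⊢
    nlinarith [hup, keyU, hlog_nx, hlog_x1n]

lemma tendsto_fS : Tendsto fS atTop (nhds 0) := by
  set D : ℝ → ℝ := fun x => Real.log (Stirling.stirlingSeq ⌊x⌋₊) - (1/2)*Real.log Real.pi
    with hD_def
  have hD : Tendsto D atTop (nhds 0) := by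
    have h1 : Tendsto (fun n : ℕ => Real.log (Stirling.stirlingSeq n)) atTop
        (nhds (Real.log (Real.sqrt Real.pi))) :=
      ((Real.continuousAt_log (by positivity : Real.sqrt Real.pi ≠ 0)).tendsto).comp
        Stirling.tendsto_stirlingSeq_sqrt_pi
    have h2 : Tendsto (fun n : ℕ => Real.log (Stirling.stirlingSeq n) - (1/2)*Real.log Real.pi)
        atTop (nhds 0) := by
      have := h1.sub_const ((1/2)*Real.log Real.pi)
      rw [Real.log_sqrt Real.pi_pos.le] at this
      convert this using 2
      ring
    exact h2.comp tendsto_nat_floor_atTop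
  have hg : Tendsto (fun x : ℝ => 3/(x-1)) atTop (nhds 0) := by
    have h1 : Tendsto (fun x : ℝ => x - 1) atTop atTop :=
      tendsto_atTop_add_const_right _ _ tendsto_id
    have h2 := (tendsto_inv_atTop_zero.comp h1).const_mul (3:ℝ)
    simpa [div_eq_mul_inv, Function.comp] using h2
  have hb : ∀ᶠ x : ℝ in atTop, ‖fS x - D x‖ ≤ 3/(x-1) := by
    filter_upwards [eventually_ge_atTop (2:ℝ)] with x hx
    have hx1 : (0:ℝ) < x - 1 := by linarith
    have h1 := fS_bound hx
    have h2 : Real.log x - Real.log (x-1) ≤ 1/(x-1) := by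
      have := log_sub_log_le hx1 (by linarith : x - 1 ≤ x)
      have e : (x - (x-1))/(x-1) = 1/(x-1) := by ring_nf
      rw [e] at this
      exact this
    have : |fS x - D x| ≤ 3/(x-1) := by
      refine le_trans h1 ?_
      have : (1:ℝ)/2 * (1/(x-1)) + 2/(x-1) ≤ 3/(x-1) := by
        have r0 : (0:ℝ) ≤ 1/(x-1) := by positivity
        have r1 : (2:ℝ)/(x-1) = 2*(1/(x-1)) := by ring
        have r2 : (3:ℝ)/(x-1) = 3*(1/(x-1)) := by ring
        linarith
      nlinarith [h2]
    simpa [Real.norm_eq_abs] using this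
  have h3 : Tendsto (fun x => fS x - D x) atTop (nhds 0) := squeeze_zero_norm' hb hg
  have := h3.add hD
  simpa using this

lemma fS_pos {z : ℝ} (hz : 0 < z) : 0 < fS z := by
  have hdec : ∀ n : ℕ, fS (z + 1 + (n:ℝ)) ≤ fS (z + 1) := by
    intro n
    induction n with
    | zero => simp
    | succ k ih =>
      have hpos : 0 < z + 1 + (k:ℝ) := by positivity
      have := fS_step hpos
      have hg := g_pos hpos
      have harg : z + 1 + ((k:ℝ)+1) = (z + 1 + (k:ℝ)) + 1 := by ring
      push_cast
      rw [harg, this]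
      linarith
  have hlim : Tendsto (fun n : ℕ => fS (z + 1 + (n:ℝ))) atTop (nhds 0) := by
    apply tendsto_fS.comp
    exact tendsto_atTop_add_const_left _ _ tendsto_natCast_atTop_atTop
  have h1 : (0:ℝ) ≤ fS (z+1) := le_of_tendsto hlim (Eventually.of_forall hdec)
  have h2 := fS_step hz
  have h3 := g_pos hz
  linarith

end StirlingAux

theorem stirlingRatio_lt_one_tendsto_one :
    (∀ z > (0:ℝ), 0 < stirlingRatio z ∧ stirlingRatio z < 1) ∧
      Tendsto stirlingRatio atTop (nhds 1) := by
  constructor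
  · intro z hz
    rw [StirlingAux.ratio_eq hz]
    refine ⟨Real.exp_pos _, ?_⟩
    rw [Real.exp_lt_one_iff]
    linarith [StirlingAux.fS_pos hz]
  · have h1 : Tendsto (fun z => Real.exp (-(StirlingAux.fS z))) atTop (nhds 1) := by
      have h2 := StirlingAux.tendsto_fS.neg
      have h3 := (Real.continuous_exp.continuousAt (x := (0:ℝ))).tendsto.comp
        (by simpa using h2)
      simpa [Function.comp_def] using h3
    refine Tendsto.congr' ?_ h1
    filter_upwards [eventually_gt_atTop (0:ℝ)] with z hz
    exact (StirlingAux.ratio_eq hz).symm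
end

section
/- There exist constants C > 0 and b₀ ∈ (0,1) such that for all b ∈ (0, b₀) and all t ∈ [1/2, 1-b], the quantity A_b(t) = ∫₀¹ K_{t,b}(x)² dx satisfies A_b(t) ≥ C b^{-1/2} / √(t(1-t)). -/
open MeasureTheory Set

noncomputable def betaFn (a c : ℝ) : ℝ := ∫ x in (0:ℝ)..1, x ^ (a - 1) * (1 - x) ^ (c - 1)

noncomputable def betaKernel (t b x : ℝ) : ℝ :=
  x ^ (t / b) * (1 - x) ^ ((1 - t) / b) / betaFn (t / b + 1) ((1 - t) / b + 1)

lemma betaFn_eq_complex (u v : ℝ) :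
    (betaFn u v : ℂ) = Complex.betaIntegral u v := by
  rw [betaFn, Complex.betaIntegral, ← intervalIntegral.integral_ofReal]
  refine intervalIntegral.integral_congr fun x hx => ?_
  rw [uIcc_of_le (by norm_num)] at hx
  push_cast
  rw [Complex.ofReal_cpow hx.1, Complex.ofReal_cpow (by linarith [hx.2])]
  push_cast
  ring

lemma betaFn_eq_Gamma {u v : ℝ} (hu : 0 < u) (hv : 0 < v) :
    betaFn u v = Real.Gamma u * Real.Gamma v / Real.Gamma (u + v) := by
  have h := Complex.Gamma_mul_Gamma_eq_betaIntegral (s := u) (t := v)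
    (by simpa using hu) (by simpa using hv)
  have hne : Real.Gamma (u + v) ≠ 0 := (Real.Gamma_pos_of_pos (by linarith)).ne'
  rw [← betaFn_eq_complex, ← Complex.ofReal_add, Complex.Gamma_ofReal, Complex.Gamma_ofReal,
    Complex.Gamma_ofReal, ← Complex.ofReal_mul] at h
  have h2 : Real.Gamma u * Real.Gamma v = Real.Gamma (u + v) * betaFn u v := by
    exact_mod_cast h
  field_simp [h2]
  rw [h2]; ring

lemma betaFn_pos {u v : ℝ} (hu : 0 < u) (hv : 0 < v) : 0 < betaFn u v := by
  rw [betaFn_eq_Gamma hu hv]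
  exact div_pos (mul_pos (Real.Gamma_pos_of_pos hu) (Real.Gamma_pos_of_pos hv))
    (Real.Gamma_pos_of_pos (by linarith))

lemma betaFn_rec {u v : ℝ} (hu : 0 < u) (hv : 0 < v) :
    betaFn (u + 1) v = u / (u + v) * betaFn u v := by
  rw [betaFn_eq_Gamma (by linarith) hv, betaFn_eq_Gamma hu hv,
    Real.Gamma_add_one hu.ne', show u + 1 + v = (u + v) + 1 by ring,
    Real.Gamma_add_one (by positivity)]
  have h1 : Real.Gamma (u + v) ≠ 0 := (Real.Gamma_pos_of_pos (by linarith)).ne'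
  have h2 : u + v ≠ 0 := by positivity
  field_simp

lemma rpow_succ {x : ℝ} (hx : 0 ≤ x) {a : ℝ} (ha : a + 1 ≠ 0) : x ^ (a + 1) = x * x ^ a := by
  rcases eq_or_lt_of_le hx with h | h
  · rw [← h, Real.zero_rpow ha, zero_mul]
  · rw [Real.rpow_add h, Real.rpow_one, mul_comm]

lemma int_f (a c : ℝ) :
    ∫ x in (0:ℝ)..1, x ^ a * (1 - x) ^ c = betaFn (a + 1) (c + 1) := by
  rw [betaFn]
  simp only [add_sub_cancel_right]

lemma int_xf {a : ℝ} (ha : 0 < a) (c : ℝ) :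
    ∫ x in (0:ℝ)..1, x * (x ^ a * (1 - x) ^ c) = betaFn (a + 2) (c + 1) := by
  rw [betaFn]
  refine intervalIntegral.integral_congr fun x hx => ?_
  rw [uIcc_of_le (by norm_num)] at hx
  have : a + 2 - 1 = (a + 1 - 1) + 1 := by ring
  rw [this, add_sub_cancel_right, add_sub_cancel_right,
    rpow_succ hx.1 (by linarith)]
  ring

lemma int_x2f {a : ℝ} (ha : 0 < a) (c : ℝ) :
    ∫ x in (0:ℝ)..1, x ^ (2:ℕ) * (x ^ a * (1 - x) ^ c) = betaFn (a + 3) (c + 1) := by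
  rw [betaFn]
  refine intervalIntegral.integral_congr fun x hx => ?_
  rw [uIcc_of_le (by norm_num)] at hx
  have h1 : a + 3 - 1 = (a + 1) + 1 := by ring
  rw [h1, add_sub_cancel_right, rpow_succ hx.1 (by linarith),
    rpow_succ hx.1 (by linarith)]
  ring

lemma cont_pow_fn {a c : ℝ} (ha : 0 < a) (hc : 0 < c) :
    Continuous (fun x : ℝ => x ^ a * (1 - x) ^ c) := by
  apply Continuous.mul
  · exact continuous_iff_continuousAt.2 fun x =>
      Real.continuousAt_rpow_const x a (Or.inr ha.le)
  · exact (continuous_iff_continuousAt.2 fun y =>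
      Real.continuousAt_rpow_const y c (Or.inr hc.le)).comp (continuous_const.sub continuous_id)

set_option maxHeartbeats 1000000 in
theorem A_lower_bound :
    ∃ C > (0:ℝ), ∃ b₀ ∈ Ioo (0:ℝ) 1, ∀ b ∈ Ioo (0:ℝ) b₀, ∀ t ∈ Icc (1/2 : ℝ) (1 - b),
      (∫ x in (0:ℝ)..1, (betaKernel t b x) ^ 2) ≥
        C * b ^ (-(1/2) : ℝ) / Real.sqrt (t * (1 - t)) := by
  refine ⟨9/128, by norm_num, 1/2, by norm_num, ?_⟩
  rintro b ⟨hb0, hb2⟩ t ⟨ht1, ht2⟩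
  have hbt : b < t := lt_of_lt_of_le hb2 ht1
  have ht0 : 0 < t := by linarith
  have h1tb : b ≤ 1 - t := by linarith
  have h1t0 : 0 < 1 - t := by linarith
  simp only [betaKernel, ge_iff_le]
  set a := t / b with hadef
  set c := (1 - t) / b with hcdef
  have ha : 0 < a := div_pos ht0 hb0
  have hc : 0 < c := div_pos h1t0 hb0
  set N := betaFn (a + 1) (c + 1) with hNdef
  have hN : 0 < N := betaFn_pos (by linarith) (by linarith)
  set K : ℝ → ℝ := fun x => x ^ a * (1 - x) ^ c / N with hKdef
  have hKc : Continuous K := (cont_pow_fn ha hc).div_const N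
  have hKnn : ∀ x ∈ Icc (0:ℝ) 1, 0 ≤ K x := fun x hx =>
    div_nonneg (mul_nonneg (Real.rpow_nonneg hx.1 a)
      (Real.rpow_nonneg (by linarith [hx.2]) c)) hN.le
  -- abbreviations
  set s := a + c + 2 with hsdef
  have hs : 0 < s := by positivity
  set μ := (a + 1) / s with hμdef
  set σ2 := (a + 1) * (c + 1) / (s ^ 2 * (s + 1)) with hσ2def
  -- moment computations
  have I0 : ∫ x in (0:ℝ)..1, x ^ a * (1 - x) ^ c = N := int_f a c
  have I1 : ∫ x in (0:ℝ)..1, x * (x ^ a * (1 - x) ^ c) = (a + 1) / s * N := by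
    rw [int_xf ha c, show a + 2 = (a + 1) + 1 by ring,
      betaFn_rec (by linarith) (by linarith : (0:ℝ) < c + 1),
      show a + 1 + (c + 1) = s by rw [hsdef]; ring]
  have I2 : ∫ x in (0:ℝ)..1, x ^ (2:ℕ) * (x ^ a * (1 - x) ^ c) =
      (a + 1) * (a + 2) / (s * (s + 1)) * N := by
    rw [int_x2f ha c, show a + 3 = (a + 2) + 1 by ring,
      betaFn_rec (by linarith) (by linarith : (0:ℝ) < c + 1),
      show a + 2 = (a + 1) + 1 by ring,
      betaFn_rec (by linarith) (by linarith : (0:ℝ) < c + 1),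
      show a + 1 + (c + 1) = s by rw [hsdef]; ring,
      show a + 1 + 1 + (c + 1) = s + 1 by rw [hsdef]; ring]
    have h1 : s ≠ 0 := hs.ne'
    have h2 : s + 1 ≠ 0 := by positivity
    field_simp
    ring
  have hfi : IntervalIntegrable (fun x => x ^ a * (1 - x) ^ c) volume 0 1 :=
    (cont_pow_fn ha hc).intervalIntegrable 0 1
  have hxfi : IntervalIntegrable (fun x => x * (x ^ a * (1 - x) ^ c)) volume 0 1 :=
    (continuous_id.mul (cont_pow_fn ha hc)).intervalIntegrable 0 1
  have hx2fi : IntervalIntegrable (fun x => x ^ (2:ℕ) * (x ^ a * (1 - x) ^ c)) volume 0 1 :=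
    ((continuous_pow 2).mul (cont_pow_fn ha hc)).intervalIntegrable 0 1
  have V : ∫ x in (0:ℝ)..1, (x - μ) ^ 2 * (x ^ a * (1 - x) ^ c) = σ2 * N := by
    have expand : ∀ x : ℝ, (x - μ) ^ 2 * (x ^ a * (1 - x) ^ c) =
        x ^ (2:ℕ) * (x ^ a * (1 - x) ^ c) - (2 * μ) * (x * (x ^ a * (1 - x) ^ c))
          + μ ^ 2 * (x ^ a * (1 - x) ^ c) := fun x => by push_cast; ring
    simp_rw [expand]
    rw [intervalIntegral.integral_add (hx2fi.sub (hxfi.const_mul _)) (hfi.const_mul _),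
      intervalIntegral.integral_sub hx2fi (hxfi.const_mul _),
      intervalIntegral.integral_const_mul, intervalIntegral.integral_const_mul,
      I0, I1, I2, hμdef, hσ2def]
    have h1 : s ≠ 0 := hs.ne'
    have h2 : s + 1 ≠ 0 := by positivity
    have h3 : s = a + c + 2 := hsdef
    field_simp
    ring_nf
    linarith
  -- bound on the variance
  have hσe : σ2 = (t + b) * (1 - t + b) * b / ((1 + 2 * b) ^ 2 * (1 + 3 * b)) := by
    rw [hσ2def, hsdef, hadef, hcdef]
    have hbne : b ≠ 0 := hb0.ne'
    field_simp
    ring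
  have hσb : σ2 ≤ 4 * (b * (t * (1 - t))) := by
    rw [hσe, div_le_iff₀ (by positivity)]
    have h2t : t + b ≤ 2 * t := by linarith
    have h2s : 1 - t + b ≤ 2 * (1 - t) := by linarith
    have hden : 1 ≤ (1 + 2 * b) ^ 2 * (1 + 3 * b) := by nlinarith
    calc (t + b) * (1 - t + b) * b ≤ (2 * t) * (2 * (1 - t)) * b := by
          apply mul_le_mul_of_nonneg_right _ hb0.le
          exact mul_le_mul h2t h2s (by linarith) (by linarith)
      _ = 4 * (b * (t * (1 - t))) * 1 := by ring
      _ ≤ 4 * (b * (t * (1 - t))) * ((1 + 2 * b) ^ 2 * (1 + 3 * b)) := by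
          apply mul_le_mul_of_nonneg_left hden (by positivity)
  -- the window
  set r := 4 * Real.sqrt (b * (t * (1 - t))) with hrdef
  have hr : 0 < r := by
    rw [hrdef]; positivity
  have hr2 : r ^ 2 = 16 * (b * (t * (1 - t))) := by
    rw [hrdef, mul_pow, Real.sq_sqrt (by positivity)]; norm_num
  have hquarter : σ2 / r ^ 2 ≤ 1 / 4 := by
    rw [hr2, div_le_iff₀ (by positivity)]
    linarith
  have hμ0 : 0 < μ := by rw [hμdef]; positivity
  have hμ1 : μ < 1 := by
    rw [hμdef, div_lt_one hs, hsdef]; linarith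
  clear_value a c N K s μ σ2 r
  set u := max 0 (μ - r) with hudef
  set v := min 1 (μ + r) with hvdef
  have hu0 : (0:ℝ) ≤ u := le_max_left _ _
  have hv1 : v ≤ 1 := min_le_left _ _
  have huv : u ≤ v :=
    max_le (le_min (by norm_num) (by linarith)) (le_min (by linarith) (by linarith))
  have hvu2r : v - u ≤ 2 * r := by
    have h1 : μ - r ≤ u := le_max_right _ _
    have h2 : v ≤ μ + r := min_le_right _ _
    linarith
  have humax : μ - r ≤ u := le_max_right _ _
  have hvmin : v ≤ μ + r := min_le_right _ _
  clear_value u v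
  set g : ℝ → ℝ := fun x => ((x - μ) / r) ^ 2 * K x with hgdef
  have hgc : Continuous g :=
    (((continuous_id.sub continuous_const).div_const r).pow 2).mul hKc
  have hKi : ∀ p q : ℝ, IntervalIntegrable K volume p q := fun p q =>
    hKc.intervalIntegrable p q
  have hgi : ∀ p q : ℝ, IntervalIntegrable g volume p q := fun p q =>
    hgc.intervalIntegrable p q
  have hgnn : ∀ x ∈ Icc (0:ℝ) 1, 0 ≤ g x := fun x hx =>
    mul_nonneg (sq_nonneg _) (hKnn x hx)
  have hK1 : ∫ x in (0:ℝ)..1, K x = 1 := by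
    rw [hKdef]
    rw [intervalIntegral.integral_div, I0, div_self hN.ne']
  have hG : ∫ x in (0:ℝ)..1, g x = σ2 / r ^ 2 := by
    have heq : ∀ x : ℝ, g x = 1 / (r ^ 2 * N) * ((x - μ) ^ 2 * (x ^ a * (1 - x) ^ c)) := by
      intro x
      rw [hgdef, hKdef]
      have h1 : r ≠ 0 := hr.ne'
      have h2 : N ≠ 0 := hN.ne'
      simp only
      rw [div_pow]
      field_simp
    simp_rw [heq]
    rw [intervalIntegral.integral_const_mul, V]
    field_simp
  have hsplitK : (∫ x in (0:ℝ)..u, K x) + (∫ x in u..v, K x) + (∫ x in v..(1:ℝ), K x) = 1 := by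
    rw [intervalIntegral.integral_add_adjacent_intervals (hKi 0 u) (hKi u v),
      intervalIntegral.integral_add_adjacent_intervals (hKi 0 v) (hKi v 1), hK1]
  have hsplitG : (∫ x in (0:ℝ)..u, g x) + (∫ x in u..v, g x) + (∫ x in v..(1:ℝ), g x)
      = σ2 / r ^ 2 := by
    rw [intervalIntegral.integral_add_adjacent_intervals (hgi 0 u) (hgi u v),
      intervalIntegral.integral_add_adjacent_intervals (hgi 0 v) (hgi v 1), hG]
  have tail1 : (∫ x in (0:ℝ)..u, K x) ≤ ∫ x in (0:ℝ)..u, g x := by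
    rcases le_or_gt (μ - r) 0 with h | h
    · have hu : u = 0 := by rw [hudef]; exact max_eq_left h
      rw [hu]
      simp
    · have hu : u = μ - r := by rw [hudef]; exact max_eq_right h.le
      apply intervalIntegral.integral_mono_on hu0 (hKi 0 u) (hgi 0 u)
      intro x hx
      have hx1 : x ≤ 1 := le_trans hx.2 (le_trans huv hv1)
      have hKx := hKnn x ⟨hx.1, hx1⟩
      have hxu : x ≤ μ - r := by rw [← hu]; exact hx.2
      have h1 : 1 ≤ ((x - μ) / r) ^ 2 := by
        have h2 : 1 ≤ (μ - x) / r := (le_div_iff₀ hr).2 (by linarith)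
        have h4 := mul_self_le_mul_self (by norm_num : (0:ℝ) ≤ 1) h2
        calc (1:ℝ) = 1 * 1 := by norm_num
          _ ≤ ((μ - x) / r) * ((μ - x) / r) := h4
          _ = ((x - μ) / r) ^ 2 := by ring
      calc K x = 1 * K x := (one_mul _).symm
        _ ≤ ((x - μ) / r) ^ 2 * K x := mul_le_mul_of_nonneg_right h1 hKx
  have tail2 : (∫ x in v..(1:ℝ), K x) ≤ ∫ x in v..(1:ℝ), g x := by
    rcases le_or_gt 1 (μ + r) with h | h
    · have hv : v = 1 := by rw [hvdef]; exact min_eq_left h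
      rw [hv]
      simp
    · have hv : v = μ + r := by rw [hvdef]; exact min_eq_right h.le
      apply intervalIntegral.integral_mono_on hv1 (hKi v 1) (hgi v 1)
      intro x hx
      have hx0 : 0 ≤ x := le_trans (le_trans hu0 huv) hx.1
      have hKx := hKnn x ⟨hx0, hx.2⟩
      have hxv : μ + r ≤ x := by rw [← hv]; exact hx.1
      have h1 : 1 ≤ ((x - μ) / r) ^ 2 := by
        have h2 : 1 ≤ (x - μ) / r := (le_div_iff₀ hr).2 (by linarith)
        have h4 := mul_self_le_mul_self (by norm_num : (0:ℝ) ≤ 1) h2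
        calc (1:ℝ) = 1 * 1 := by norm_num
          _ ≤ ((x - μ) / r) * ((x - μ) / r) := h4
          _ = ((x - μ) / r) ^ 2 := by ring
      calc K x = 1 * K x := (one_mul _).symm
        _ ≤ ((x - μ) / r) ^ 2 * K x := mul_le_mul_of_nonneg_right h1 hKx
  have hmidG : 0 ≤ ∫ x in u..v, g x :=
    intervalIntegral.integral_nonneg huv fun x hx =>
      hgnn x ⟨le_trans hu0 hx.1, le_trans hx.2 hv1⟩
  have hmidK : 3 / 4 ≤ ∫ x in u..v, K x := by linarith
  have huvlt : u < v := by
    rcases eq_or_lt_of_le huv with h | h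
    · exfalso
      rw [← h, intervalIntegral.integral_same] at hmidK
      linarith
    · exact h
  -- Cauchy-Schwarz
  set S := ∫ x in u..v, K x with hSdef
  set Q := ∫ x in u..v, (K x) ^ 2 with hQdef
  have hKsqi : ∀ p q : ℝ, IntervalIntegrable (fun x => (K x) ^ 2) volume p q := fun p q =>
    (hKc.pow 2).intervalIntegrable p q
  have hvu : 0 < v - u := by linarith
  have hCS : S ^ 2 ≤ (v - u) * Q := by
    set m := S / (v - u) with hmdef
    have h0 : 0 ≤ ∫ x in u..v, (K x - m) ^ 2 :=
      intervalIntegral.integral_nonneg huv fun x _ => sq_nonneg _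
    have hexp : ∫ x in u..v, (K x - m) ^ 2 = Q - 2 * m * S + (v - u) * m ^ 2 := by
      have heq : ∀ x : ℝ, (K x - m) ^ 2 = (K x) ^ 2 - (2 * m) * K x + m ^ 2 := fun x => by ring
      simp_rw [heq]
      rw [intervalIntegral.integral_add ((hKsqi u v).sub ((hKi u v).const_mul _))
          (intervalIntegrable_const),
        intervalIntegral.integral_sub (hKsqi u v) ((hKi u v).const_mul _),
        intervalIntegral.integral_const_mul, intervalIntegral.integral_const]
      rw [smul_eq_mul]
    rw [hexp] at h0
    have hm : m * (v - u) = S := div_mul_cancel₀ _ hvu.ne'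
    have h6 := mul_nonneg hvu.le h0
    have h7 : (v - u) * (Q - 2 * m * S + (v - u) * m ^ 2)
        = (v - u) * Q - (m * (v - u)) * S * 2 + (m * (v - u)) * (m * (v - u)) := by ring
    rw [h7, hm] at h6
    have h8 : S ^ 2 = S * S := sq S
    linarith
  have hQnn : 0 ≤ Q :=
    intervalIntegral.integral_nonneg huv fun x _ => sq_nonneg _
  have hsq : Q ≤ ∫ x in (0:ℝ)..1, (K x) ^ 2 := by
    have hsplit : (∫ x in (0:ℝ)..u, (K x) ^ 2) + Q + (∫ x in v..(1:ℝ), (K x) ^ 2)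
        = ∫ x in (0:ℝ)..1, (K x) ^ 2 := by
      rw [hQdef, intervalIntegral.integral_add_adjacent_intervals (hKsqi 0 u) (hKsqi u v),
        intervalIntegral.integral_add_adjacent_intervals (hKsqi 0 v) (hKsqi v 1)]
    have h1 : 0 ≤ ∫ x in (0:ℝ)..u, (K x) ^ 2 :=
      intervalIntegral.integral_nonneg hu0 fun x _ => sq_nonneg _
    have h2 : 0 ≤ ∫ x in v..(1:ℝ), (K x) ^ 2 :=
      intervalIntegral.integral_nonneg hv1 fun x _ => sq_nonneg _
    linarith
  -- assemble
  have hfinal : 9 / 16 / (2 * r) ≤ ∫ x in (0:ℝ)..1, (K x) ^ 2 := by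
    have h1 : (9:ℝ) / 16 ≤ S ^ 2 := by
      have h4 := mul_self_le_mul_self (by norm_num : (0:ℝ) ≤ 3/4) hmidK
      calc (9:ℝ) / 16 = (3/4) * (3/4) := by norm_num
        _ ≤ S * S := h4
        _ = S ^ 2 := (sq S).symm
    have h2 : (v - u) * Q ≤ 2 * r * Q := by
      apply mul_le_mul_of_nonneg_right hvu2r hQnn
    have h3 : 9 / 16 ≤ 2 * r * Q := by linarith
    rw [div_le_iff₀ (by linarith : (0:ℝ) < 2 * r)]
    calc (9:ℝ) / 16 ≤ 2 * r * Q := h3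
      _ ≤ 2 * r * (∫ x in (0:ℝ)..1, (K x) ^ 2) :=
          mul_le_mul_of_nonneg_left hsq (by linarith)
      _ = (∫ x in (0:ℝ)..1, (K x) ^ 2) * (2 * r) := by ring
  have hrw : (9:ℝ) / 128 * b ^ (-(1/2) : ℝ) / Real.sqrt (t * (1 - t)) = 9 / 16 / (2 * r) := by
    rw [Real.rpow_neg hb0.le, ← Real.sqrt_eq_rpow, hrdef,
      Real.sqrt_mul hb0.le]
    have h1 : Real.sqrt b ≠ 0 := (Real.sqrt_pos.2 hb0).ne'
    have h2 : Real.sqrt (t * (1 - t)) ≠ 0 := (Real.sqrt_pos.2 (by positivity)).ne'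
    field_simp
    ring
  rw [hrw]
  have hfin2 := hfinal
  simp only [hKdef] at hfin2
  exact hfin2
end

section
/- There exist constants C > 0 and b₀ ∈ (0,1) such that for all b ∈ (0, b₀) and all t ∈ (0,1), sup_{x ∈ [0,1]} K_{t,b}(x) ≤ C b^{-1/2} / √(t(1-t)). -/
open MeasureTheory Set

private lemma cont_h (p q : ℝ) (hp : 0 ≤ p) (hq : 0 ≤ q) :
    Continuous (fun x : ℝ => x ^ p * (1 - x) ^ q) := by
  apply Continuous.mul
  · exact continuous_iff_continuousAt.2 fun x => Real.continuousAt_rpow_const x p (Or.inr hp)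
  · exact (continuous_iff_continuousAt.2 fun x =>
      Real.continuousAt_rpow_const x q (Or.inr hq)).comp (continuous_const.sub continuous_id)

private lemma aux_e1 (x t b : ℝ) (ht0 : 0 < t) (hb : 0 < b) :
    (x / t - 1) * (t / b) = (x - t) / b := by
  field_simp

private lemma aux_e2 (x t b : ℝ) (h1t : 0 < 1 - t) (hb : 0 < b) :
    ((1 - x) / (1 - t) - 1) * ((1 - t) / b) = (t - x) / b := by
  field_simp
  ring

private lemma aux_step3 (w M : ℝ) (hw0 : 0 < w) (hM0 : 0 < M) :
    M / (w * (Real.exp (-2) * M)) = Real.exp 2 / w := by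
  rw [Real.exp_neg, div_eq_div_iff (by positivity) hw0.ne']
  field_simp

private lemma aux_we1 (t v b : ℝ) (hd1 : 0 < t + v) (hb : 0 < b) :
    (t / (t+v) - 1) * (t/b) = -(v * t) / (b * (t+v)) := by
  rw [div_sub_one hd1.ne', div_mul_div_comm,
    show (t - (t+v)) * t = -(v*t) by ring, mul_comm (t+v) b]

private lemma aux_we2 (t v b : ℝ) (hd2 : 0 < 1 - (t+v)) (hb : 0 < b) :
    ((1-t) / (1-(t+v)) - 1) * ((1-t)/b) = v * (1-t) / (b * (1-(t+v))) := by
  rw [div_sub_one hd2.ne', div_mul_div_comm,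
    show ((1-t) - (1-(t+v))) * (1-t) = v*(1-t) by ring, mul_comm (1-(t+v)) b]

private lemma mode_max {t b x : ℝ} (hb : 0 < b) (ht0 : 0 < t) (ht1 : t < 1)
    (hx : x ∈ Icc (0:ℝ) 1) :
    x ^ (t/b) * (1-x) ^ ((1-t)/b) ≤ t ^ (t/b) * (1-t) ^ ((1-t)/b) := by
  have h1t : 0 < 1 - t := by linarith
  have hα : 0 < t / b := by positivity
  have hβ : 0 < (1-t) / b := by positivity
  have hR : 0 < t ^ (t/b) * (1-t) ^ ((1-t)/b) := by positivity
  rcases eq_or_lt_of_le hx.1 with h0 | h0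
  · rw [← h0, Real.zero_rpow hα.ne', zero_mul]; exact hR.le
  rcases eq_or_lt_of_le hx.2 with h1 | h1
  · rw [h1, show (1:ℝ) - 1 = 0 by ring, Real.zero_rpow hβ.ne', mul_zero]; exact hR.le
  have h1x : 0 < 1 - x := by linarith
  rw [Real.rpow_def_of_pos h0, Real.rpow_def_of_pos h1x, Real.rpow_def_of_pos ht0,
    Real.rpow_def_of_pos h1t, ← Real.exp_add, ← Real.exp_add, Real.exp_le_exp]
  have l1 : Real.log x - Real.log t ≤ x / t - 1 := by
    have := Real.log_le_sub_one_of_pos (show (0:ℝ) < x / t by positivity)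
    rwa [Real.log_div h0.ne' ht0.ne'] at this
  have l2 : Real.log (1-x) - Real.log (1-t) ≤ (1-x) / (1-t) - 1 := by
    have := Real.log_le_sub_one_of_pos (show (0:ℝ) < (1-x) / (1-t) by positivity)
    rwa [Real.log_div h1x.ne' h1t.ne'] at this
  have p1 : Real.log x * (t/b) ≤ Real.log t * (t/b) + (x - t)/b := by
    have h := mul_le_mul_of_nonneg_right l1 hα.le
    rw [sub_mul, aux_e1 x t b ht0 hb] at h
    linarith
  have p2 : Real.log (1-x) * ((1-t)/b) ≤ Real.log (1-t) * ((1-t)/b) + (t - x)/b := by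
    have h := mul_le_mul_of_nonneg_right l2 hβ.le
    rw [sub_mul, aux_e2 x t b h1t hb] at h
    linarith
  have hcancel : (x - t)/b + (t - x)/b = 0 := by ring
  linarith

private lemma window_lb {t b v : ℝ} (hb : 0 < b) (hb16 : b < 1/16) (ht0 : 0 < t)
    (ht2 : t ≤ 1/2) (hv0 : 0 ≤ v) (hvw : v ≤ Real.sqrt (b * (t * (1-t)))) :
    Real.exp (-2) * (t ^ (t/b) * (1-t) ^ ((1-t)/b))
      ≤ (t+v) ^ (t/b) * (1-(t+v)) ^ ((1-t)/b) := by
  have h1t : 0 < 1 - t := by linarith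
  have hw2 : Real.sqrt (b * (t * (1-t))) ^ 2 = b * (t * (1-t)) := Real.sq_sqrt (by positivity)
  have hv2 : v ^ 2 ≤ b * (t * (1-t)) := by
    nlinarith [Real.sqrt_nonneg (b * (t * (1-t)))]
  have hbt : b * (t * (1-t)) ≤ 1/64 := by
    nlinarith [sq_nonneg (t - 1/2), mul_pos ht0 h1t]
  have hv8 : v ≤ 1/8 := by nlinarith [sq_nonneg (v - 1/8)]
  have hd1 : 0 < t + v := by linarith
  have hd2 : 0 < 1 - (t + v) := by linarith
  have hα : 0 < t / b := by positivity
  have hβ : 0 < (1-t) / b := by positivity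
  rw [Real.rpow_def_of_pos ht0, Real.rpow_def_of_pos h1t, Real.rpow_def_of_pos hd1,
    Real.rpow_def_of_pos hd2, ← Real.exp_add, ← Real.exp_add, ← Real.exp_add, Real.exp_le_exp]
  have l1 : Real.log t - Real.log (t+v) ≤ t / (t+v) - 1 := by
    have := Real.log_le_sub_one_of_pos (show (0:ℝ) < t / (t+v) by positivity)
    rwa [Real.log_div ht0.ne' hd1.ne'] at this
  have l2 : Real.log (1-t) - Real.log (1-(t+v)) ≤ (1-t) / (1-(t+v)) - 1 := by
    have := Real.log_le_sub_one_of_pos (show (0:ℝ) < (1-t) / (1-(t+v)) by positivity)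
    rwa [Real.log_div h1t.ne' hd2.ne'] at this
  have key : (t / (t+v) - 1) * (t/b) + ((1-t) / (1-(t+v)) - 1) * ((1-t)/b) ≤ 2 := by
    rw [aux_we1 t v b hd1 hb, aux_we2 t v b hd2 hb, div_add_div _ _ (by positivity) (by positivity), div_le_iff₀ (by positivity)]
    have hlin : (0:ℝ) ≤ 1 - t - 2*v := by linarith
    have h1 : b * v^2 ≤ b * (b * (t * (1-t))) := mul_le_mul_of_nonneg_left hv2 hb.le
    have h2 : t * (1-t) ≤ 2 * ((t+v) * (1-(t+v))) := by
      nlinarith [mul_nonneg ht0.le hlin, mul_nonneg hv0 hd2.le]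
    have h3 : b * b * (t * (1-t)) ≤ b * b * (2 * ((t+v) * (1-(t+v)))) :=
      mul_le_mul_of_nonneg_left h2 (by positivity)
    nlinarith [h1, h3]
  nlinarith [mul_le_mul_of_nonneg_right l1 hα.le, mul_le_mul_of_nonneg_right l2 hβ.le]

private lemma betaFn_eq (t b : ℝ) :
    betaFn (t/b + 1) ((1-t)/b + 1) = ∫ x in (0:ℝ)..1, x ^ (t/b) * (1-x) ^ ((1-t)/b) := by
  unfold betaFn
  simp [add_sub_cancel_right]

private lemma betaFn_lb {t b : ℝ} (hb : 0 < b) (hb16 : b < 1/16) (ht0 : 0 < t)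
    (ht2 : t ≤ 1/2) :
    Real.sqrt (b * (t * (1-t))) * (Real.exp (-2) * (t ^ (t/b) * (1-t) ^ ((1-t)/b)))
      ≤ betaFn (t/b + 1) ((1-t)/b + 1) := by
  have h1t : 0 < 1 - t := by linarith
  set w := Real.sqrt (b * (t * (1-t))) with hw
  have hw0 : 0 ≤ w := Real.sqrt_nonneg _
  have hw2 : w ^ 2 = b * (t * (1-t)) := Real.sq_sqrt (by positivity)
  have hbt : b * (t * (1-t)) ≤ 1/64 := by
    nlinarith [sq_nonneg (t - 1/2), mul_pos ht0 h1t]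
  have hw8 : w ≤ 1/8 := by nlinarith [sq_nonneg (w - 1/8)]
  have htw : t + w ≤ 1 := by linarith
  have hcont := cont_h (t/b) ((1-t)/b) (by positivity) (by positivity)
  have hint : ∀ a c : ℝ, IntervalIntegrable (fun x : ℝ => x ^ (t/b) * (1-x) ^ ((1-t)/b))
      volume a c := fun a c => hcont.intervalIntegrable a c
  rw [betaFn_eq]
  have split1 := intervalIntegral.integral_add_adjacent_intervals (μ := volume)
    (hint 0 t) (hint t (t+w))
  have split2 := intervalIntegral.integral_add_adjacent_intervals (μ := volume)
    (hint 0 (t+w)) (hint (t+w) 1)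
  have nn1 : (0:ℝ) ≤ ∫ x in (0:ℝ)..t, x ^ (t/b) * (1-x) ^ ((1-t)/b) := by
    apply intervalIntegral.integral_nonneg ht0.le
    intro u hu
    have : 0 ≤ u := hu.1
    have : (0:ℝ) ≤ 1 - u := by have := hu.2; linarith
    positivity
  have nn2 : (0:ℝ) ≤ ∫ x in (t+w)..1, x ^ (t/b) * (1-x) ^ ((1-t)/b) := by
    apply intervalIntegral.integral_nonneg htw
    intro u hu
    have : 0 ≤ u := le_trans (by positivity) hu.1
    have : (0:ℝ) ≤ 1 - u := by have := hu.2; linarith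
    positivity
  have mid : w * (Real.exp (-2) * (t ^ (t/b) * (1-t) ^ ((1-t)/b)))
      ≤ ∫ x in t..(t+w), x ^ (t/b) * (1-x) ^ ((1-t)/b) := by
    have hmono := intervalIntegral.integral_mono_on (μ := volume)
      (show t ≤ t + w by linarith)
      (intervalIntegrable_const
        (c := Real.exp (-2) * (t ^ (t/b) * (1-t) ^ ((1-t)/b)))) (hint t (t+w))
      (fun u hu => by
        have h := window_lb hb hb16 ht0 ht2 (v := u - t) (by linarith [hu.1])
          (by rw [hw] at hu; linarith [hu.2])
        simpa using h)
    rw [intervalIntegral.integral_const, smul_eq_mul] at hmono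
    calc w * (Real.exp (-2) * (t ^ (t/b) * (1-t) ^ ((1-t)/b)))
        = (t + w - t) * (Real.exp (-2) * (t ^ (t/b) * (1-t) ^ ((1-t)/b))) := by ring_nf
      _ ≤ _ := hmono
  linarith

private lemma betaFn_symm (a c : ℝ) : betaFn a c = betaFn c a := by
  unfold betaFn
  have h := intervalIntegral.integral_comp_sub_left
    (fun x : ℝ => x ^ (c-1) * (1-x) ^ (a-1)) 1 (a := 0) (b := 1)
  simp only [show (1:ℝ) - 1 = 0 by ring, show (1:ℝ) - 0 = 1 by ring] at h
  rw [← h]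
  congr 1
  ext x
  rw [show (1:ℝ) - (1 - x) = x by ring, mul_comm]

private lemma betaKernel_symm (t b x : ℝ) : betaKernel t b x = betaKernel (1-t) b (1-x) := by
  unfold betaKernel
  rw [show (1:ℝ) - (1-t) = t by ring, show (1:ℝ) - (1-x) = x by ring,
    betaFn_symm ((1-t)/b + 1), mul_comm]

private lemma half_bound {t b x : ℝ} (hb : 0 < b) (hb16 : b < 1/16) (ht0 : 0 < t)
    (ht1 : t < 1) (ht2 : t ≤ 1/2) (hx : x ∈ Icc (0:ℝ) 1) :
    betaKernel t b x ≤ 8 * b ^ (-(1/2) : ℝ) / Real.sqrt (t * (1-t)) := by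
  have h1t : 0 < 1 - t := by linarith
  set M := t ^ (t/b) * (1-t) ^ ((1-t)/b) with hM
  have hM0 : 0 < M := by positivity
  set w := Real.sqrt (b * (t * (1-t))) with hw
  have hw0 : 0 < w := Real.sqrt_pos.2 (by positivity)
  have hBlb : w * (Real.exp (-2) * M) ≤ betaFn (t/b + 1) ((1-t)/b + 1) :=
    betaFn_lb hb hb16 ht0 ht2
  have hB0 : 0 < betaFn (t/b + 1) ((1-t)/b + 1) :=
    lt_of_lt_of_le (by positivity) hBlb
  have step1 : betaKernel t b x ≤ M / betaFn (t/b + 1) ((1-t)/b + 1) := by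
    unfold betaKernel
    gcongr
    exact mode_max hb ht0 ht1 hx
  have step2 : M / betaFn (t/b + 1) ((1-t)/b + 1) ≤ M / (w * (Real.exp (-2) * M)) := by
    gcongr
  have step3 : M / (w * (Real.exp (-2) * M)) = Real.exp 2 / w :=
    aux_step3 w M hw0 hM0
  have hexp : Real.exp 2 ≤ 8 := by
    have h1 := Real.exp_one_lt_d9
    have : Real.exp 2 = Real.exp 1 * Real.exp 1 := by
      rw [← Real.exp_add]; norm_num
    nlinarith [Real.exp_pos 1]
  have hwsplit : w = Real.sqrt b * Real.sqrt (t * (1-t)) := Real.sqrt_mul hb.le _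
  have hrpow : b ^ (-(1/2) : ℝ) = (Real.sqrt b)⁻¹ := by
    rw [Real.rpow_neg hb.le, Real.sqrt_eq_rpow]
  have hfinal : Real.exp 2 / w ≤ 8 * b ^ (-(1/2) : ℝ) / Real.sqrt (t * (1-t)) := by
    rw [hrpow, hwsplit]
    have hsb : 0 < Real.sqrt b := Real.sqrt_pos.2 hb
    have hst : 0 < Real.sqrt (t * (1-t)) := Real.sqrt_pos.2 (by positivity)
    rw [div_le_div_iff₀ (by positivity) hst]
    have : Real.exp 2 * Real.sqrt (t * (1-t)) ≤ 8 * Real.sqrt (t * (1-t)) := by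
      nlinarith
    calc Real.exp 2 * Real.sqrt (t * (1-t)) ≤ 8 * Real.sqrt (t * (1-t)) := this
      _ = 8 * (Real.sqrt b)⁻¹ * (Real.sqrt b * Real.sqrt (t * (1-t))) := by
          field_simp
  calc betaKernel t b x ≤ M / betaFn (t/b + 1) ((1-t)/b + 1) := step1
    _ ≤ M / (w * (Real.exp (-2) * M)) := step2
    _ = Real.exp 2 / w := step3
    _ ≤ _ := hfinal

theorem betaKernel_sup_bound :
    ∃ C > (0:ℝ), ∃ b₀ ∈ Ioo (0:ℝ) 1, ∀ b ∈ Ioo (0:ℝ) b₀, ∀ t ∈ Ioo (0:ℝ) 1,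
      ∀ x ∈ Icc (0:ℝ) 1,
        betaKernel t b x ≤ C * b ^ (-(1/2) : ℝ) / Real.sqrt (t * (1 - t)) := by
  refine ⟨8, by norm_num, 1/16, by norm_num, ?_⟩
  intro b hb t ht x hx
  by_cases hc : t ≤ 1/2
  · exact half_bound hb.1 hb.2 ht.1 ht.2 hc hx
  · rw [betaKernel_symm]
    have h := half_bound (t := 1-t) (x := 1-x) hb.1 hb.2 (by linarith [ht.2])
      (by linarith [ht.1]) (by linarith [not_le.1 hc])
      ⟨by linarith [hx.2], by linarith [hx.1]⟩
    rw [show (1:ℝ) - (1-t) = t by ring, mul_comm (1-t) t] at h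
    exact h
end

section
/- There exist constants C > 0 and b₀ ∈ (0,1) such that for all b ∈ (0,b₀) and all t ∈ [1/4, 3/4], K_{t,b}(t) ≥ C b^{-1/2}. -/
open MeasureTheory Set

lemma sqrt_ineq {x t : ℝ} (hx : x ∈ Set.Icc (0:ℝ) 1) (ht : t ∈ Set.Icc (0:ℝ) 1) :
    (x - t)^2 ≤ (Real.sqrt x - Real.sqrt t)^2 + (Real.sqrt (1-x) - Real.sqrt (1-t))^2 := by
  obtain ⟨hx0, hx1⟩ := hx
  obtain ⟨ht0, ht1⟩ := ht
  have hu : (Real.sqrt x)^2 = x := Real.sq_sqrt hx0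
  have hv : (Real.sqrt t)^2 = t := Real.sq_sqrt ht0
  have hp : (Real.sqrt (1-x))^2 = 1-x := Real.sq_sqrt (by linarith)
  have hq : (Real.sqrt (1-t))^2 = 1-t := Real.sq_sqrt (by linarith)
  set u := Real.sqrt x
  set v := Real.sqrt t
  set p := Real.sqrt (1-x)
  set q := Real.sqrt (1-t)
  have e1 : (x - t)^2 = (u-v)^2 * (u+v)^2 := by rw [← hu, ← hv]; ring
  have e2 : (x - t)^2 = (p-q)^2 * (p+q)^2 := by
    have : x - t = (1-t) - (1-x) := by ring
    rw [this, ← hp, ← hq]; ring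
  have b1 : (u+v)^2 ≤ 2*(x+t) := by nlinarith [sq_nonneg (u-v)]
  have b2 : (p+q)^2 ≤ 2*(2-x-t) := by nlinarith [sq_nonneg (p-q)]
  have h1 : (x-t)^2 ≤ 2*(x+t) * (u-v)^2 := by
    rw [e1]; nlinarith [sq_nonneg (u-v)]
  have h2 : (x-t)^2 ≤ 2*(2-x-t) * (p-q)^2 := by
    rw [e2]; nlinarith [sq_nonneg (p-q)]
  have hs0 : 0 ≤ x + t := by linarith
  have hs2 : 0 ≤ 2 - x - t := by linarith
  nlinarith [mul_le_mul_of_nonneg_left h1 hs2, mul_le_mul_of_nonneg_left h2 hs0,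
    sq_nonneg (u-v), sq_nonneg (p-q), sq_nonneg (x+t-1), mul_nonneg hs0 hs2]

lemma log_part {x t : ℝ} (hx : 0 < x) (ht : 0 < t) :
    t * (Real.log x - Real.log t) ≤ 2 * (Real.sqrt t * Real.sqrt x - t) := by
  have hsx : 0 < Real.sqrt x := Real.sqrt_pos.mpr hx
  have hst : 0 < Real.sqrt t := Real.sqrt_pos.mpr ht
  have h1 : Real.log (Real.sqrt x / Real.sqrt t) ≤ Real.sqrt x / Real.sqrt t - 1 :=
    Real.log_le_sub_one_of_pos (by positivity)
  rw [Real.log_div (ne_of_gt hsx) (ne_of_gt hst), Real.log_sqrt hx.le,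
    Real.log_sqrt ht.le] at h1
  have ht' : Real.sqrt t * Real.sqrt t = t := Real.mul_self_sqrt ht.le
  have key : t * (Real.log x / 2 - Real.log t / 2) ≤ t * (Real.sqrt x / Real.sqrt t - 1) :=
    mul_le_mul_of_nonneg_left h1 ht.le
  have : t * (Real.sqrt x / Real.sqrt t) = Real.sqrt t * Real.sqrt x := by
    field_simp
    linear_combination -ht'
  nlinarith [key]

lemma log_ineq {x t : ℝ} (hx : x ∈ Set.Ioo (0:ℝ) 1) (ht : t ∈ Set.Ioo (0:ℝ) 1) :
    t * Real.log x + (1-t) * Real.log (1-x) + (x-t)^2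
      ≤ t * Real.log t + (1-t) * Real.log (1-t) := by
  obtain ⟨hx0, hx1⟩ := hx
  obtain ⟨ht0, ht1⟩ := ht
  have h1 := log_part hx0 ht0
  have h2 := log_part (x := 1-x) (t := 1-t) (by linarith) (by linarith)
  have h3 := sqrt_ineq (x := x) (t := t) ⟨hx0.le, hx1.le⟩ ⟨ht0.le, ht1.le⟩
  have hu : (Real.sqrt x)^2 = x := Real.sq_sqrt hx0.le
  have hv : (Real.sqrt t)^2 = t := Real.sq_sqrt ht0.le
  have hp : (Real.sqrt (1-x))^2 = 1-x := Real.sq_sqrt (by linarith)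
  have hq : (Real.sqrt (1-t))^2 = 1-t := Real.sq_sqrt (by linarith)
  nlinarith [h1, h2, h3]

lemma pointwise_bound {x t b : ℝ} (hx : x ∈ Set.Ioo (0:ℝ) 1) (ht : t ∈ Set.Ioo (0:ℝ) 1)
    (hb : 0 < b) :
    x ^ (t/b) * (1-x) ^ ((1-t)/b)
      ≤ t ^ (t/b) * (1-t) ^ ((1-t)/b) * Real.exp (-(x-t)^2/b) := by
  obtain ⟨hx0, hx1⟩ := hx
  obtain ⟨ht0, ht1⟩ := ht
  rw [Real.rpow_def_of_pos hx0, Real.rpow_def_of_pos (by linarith : (0:ℝ) < 1 - x),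
    Real.rpow_def_of_pos ht0, Real.rpow_def_of_pos (by linarith : (0:ℝ) < 1 - t),
    ← Real.exp_add, ← Real.exp_add, ← Real.exp_add]
  apply Real.exp_le_exp.mpr
  have h := mul_le_mul_of_nonneg_right (log_ineq ⟨hx0, hx1⟩ ⟨ht0, ht1⟩)
    (le_of_lt (one_div_pos.mpr hb))
  have e1 : Real.log x * (t / b) + Real.log (1 - x) * ((1 - t) / b)
      = (t * Real.log x + (1-t) * Real.log (1-x)) * (1/b) := by ring
  have e2 : Real.log t * (t / b) + Real.log (1 - t) * ((1 - t) / b) + -(x - t) ^ 2 / b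
      = (t * Real.log t + (1-t) * Real.log (1-t)) * (1/b) - (x-t)^2 * (1/b) := by ring
  rw [e1, e2]
  linarith [h]

lemma gauss_int_le {t b : ℝ} (hb : 0 < b) :
    ∫ x in (0:ℝ)..1, Real.exp (-(x-t)^2/b) ≤ Real.sqrt (Real.pi * b) := by
  have hb' : 0 < 1/b := one_div_pos.mpr hb
  have hI : Integrable (fun x : ℝ => Real.exp (-(1/b) * (x - t)^2)) :=
    (integrable_exp_neg_mul_sq hb').comp_sub_right t
  have heq : ∀ x : ℝ, Real.exp (-(x-t)^2/b) = Real.exp (-(1/b) * (x - t)^2) := by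
    intro x; congr 1; ring
  simp_rw [heq]
  rw [intervalIntegral.integral_of_le zero_le_one]
  have h1 : ∫ x in Set.Ioc (0:ℝ) 1, Real.exp (-(1/b) * (x - t)^2)
      ≤ ∫ x : ℝ, Real.exp (-(1/b) * (x - t)^2) := by
    apply setIntegral_le_integral hI
    filter_upwards with x using (Real.exp_pos _).le
  have h2 : (∫ x : ℝ, Real.exp (-(1/b) * (x - t)^2)) = Real.sqrt (Real.pi * b) := by
    rw [integral_sub_right_eq_self (μ := volume) (fun y : ℝ => Real.exp (-(1/b) * y^2)) t]
    rw [integral_gaussian]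
    congr 1
    field_simp
  linarith

lemma cont_f {t b : ℝ} (ht0 : 0 ≤ t) (ht1 : t ≤ 1) (hb : 0 < b) :
    Continuous (fun x : ℝ => x ^ (t/b) * (1-x) ^ ((1-t)/b)) := by
  have h1 : Continuous (fun x : ℝ => x ^ (t/b)) :=
    Real.continuous_rpow_const (div_nonneg ht0 hb.le)
  have h2 : Continuous (fun x : ℝ => (1-x) ^ ((1-t)/b)) :=
    (Real.continuous_rpow_const (div_nonneg (by linarith) hb.le)).comp
      (continuous_const.sub continuous_id)
  exact h1.mul h2

lemma betaFn_le {t b : ℝ} (ht : t ∈ Set.Ioo (0:ℝ) 1) (hb : 0 < b) :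
    betaFn (t/b+1) ((1-t)/b+1)
      ≤ t ^ (t/b) * (1-t) ^ ((1-t)/b) * Real.sqrt (Real.pi * b) := by
  obtain ⟨ht0, ht1⟩ := ht
  have hM : 0 < t ^ (t/b) * (1-t) ^ ((1-t)/b) := by
    have h1 : (0:ℝ) < 1 - t := by linarith
    positivity
  simp only [betaFn, add_sub_cancel_right]
  have hf : IntervalIntegrable (fun x : ℝ => x ^ (t/b) * (1-x) ^ ((1-t)/b)) volume 0 1 :=
    (cont_f ht0.le ht1.le hb).intervalIntegrable 0 1
  have hgc : Continuous (fun x : ℝ => t ^ (t/b) * (1-t) ^ ((1-t)/b) * Real.exp (-(x-t)^2/b)) := by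
    fun_prop
  have hg : IntervalIntegrable
      (fun x : ℝ => t ^ (t/b) * (1-t) ^ ((1-t)/b) * Real.exp (-(x-t)^2/b)) volume 0 1 :=
    hgc.intervalIntegrable 0 1
  have step1 : (∫ x in (0:ℝ)..1, x ^ (t/b) * (1-x) ^ ((1-t)/b))
      ≤ ∫ x in (0:ℝ)..1, t ^ (t/b) * (1-t) ^ ((1-t)/b) * Real.exp (-(x-t)^2/b) := by
    apply intervalIntegral.integral_mono_on zero_le_one hf hg
    intro x hx
    rcases eq_or_lt_of_le hx.1 with h0 | h0
    · rw [← h0, Real.zero_rpow (ne_of_gt (div_pos ht0 hb)), zero_mul]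
      exact mul_nonneg hM.le (Real.exp_pos _).le
    · rcases eq_or_lt_of_le hx.2 with h1 | h1
      · rw [h1, sub_self, Real.zero_rpow (ne_of_gt (div_pos (by linarith : (0:ℝ) < 1 - t) hb)),
          mul_zero]
        exact mul_nonneg hM.le (Real.exp_pos _).le
      · exact pointwise_bound ⟨h0, h1⟩ ⟨ht0, ht1⟩ hb
  have step2 : (∫ x in (0:ℝ)..1, t ^ (t/b) * (1-t) ^ ((1-t)/b) * Real.exp (-(x-t)^2/b))
      = t ^ (t/b) * (1-t) ^ ((1-t)/b) * ∫ x in (0:ℝ)..1, Real.exp (-(x-t)^2/b) := by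
    rw [intervalIntegral.integral_const_mul]
  calc (∫ x in (0:ℝ)..1, x ^ (t/b) * (1-x) ^ ((1-t)/b))
      ≤ _ := step1
    _ = _ := step2
    _ ≤ t ^ (t/b) * (1-t) ^ ((1-t)/b) * Real.sqrt (Real.pi * b) :=
        mul_le_mul_of_nonneg_left (gauss_int_le hb) hM.le

lemma betaFn_pos_s13 {t b : ℝ} (ht : t ∈ Set.Ioo (0:ℝ) 1) (hb : 0 < b) :
    0 < betaFn (t/b+1) ((1-t)/b+1) := by
  obtain ⟨ht0, ht1⟩ := ht
  simp only [betaFn, add_sub_cancel_right]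
  apply intervalIntegral.intervalIntegral_pos_of_pos_on
    ((cont_f ht0.le ht1.le hb).intervalIntegrable 0 1)
  · intro x hx
    have h1 : (0:ℝ) < 1 - x := by linarith [hx.2]
    have h0 := hx.1
    positivity
  · norm_num

theorem betaKernel_mode_lower_bound :
    ∃ C > (0:ℝ), ∃ b₀ ∈ Ioo (0:ℝ) 1, ∀ b ∈ Ioo (0:ℝ) b₀, ∀ t ∈ Icc (1/4 : ℝ) (3/4),
      betaKernel t b t ≥ C * b ^ (-(1/2) : ℝ) := by
  refine ⟨1/2, by norm_num, 1/2, ⟨by norm_num, by norm_num⟩, ?_⟩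
  intro b hb t ht
  obtain ⟨hb0, _⟩ := hb
  have ht' : t ∈ Set.Ioo (0:ℝ) 1 := ⟨by linarith [ht.1], by linarith [ht.2]⟩
  have h1t : (0:ℝ) < 1 - t := by linarith [ht'.2]
  have ht0 := ht'.1
  have hB : 0 < betaFn (t/b+1) ((1-t)/b+1) := betaFn_pos_s13 ht' hb0
  have hLe := betaFn_le ht' hb0
  have hM : 0 < t ^ (t/b) * (1-t) ^ ((1-t)/b) := by positivity
  have hsb : 0 < Real.sqrt (Real.pi * b) := Real.sqrt_pos.mpr (by positivity)
  have hsbb : 0 < Real.sqrt b := Real.sqrt_pos.mpr hb0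
  have hsp : 0 < Real.sqrt Real.pi := Real.sqrt_pos.mpr Real.pi_pos
  have hsple : Real.sqrt Real.pi ≤ 2 := by
    rw [show (2:ℝ) = Real.sqrt 4 by
      rw [show (4:ℝ) = 2^2 by norm_num, Real.sqrt_sq (by norm_num : (0:ℝ) ≤ 2)]]
    exact Real.sqrt_le_sqrt (by linarith [Real.pi_le_four])
  rw [ge_iff_le, betaKernel]
  have key : 1 / Real.sqrt (Real.pi * b)
      ≤ t ^ (t/b) * (1-t) ^ ((1-t)/b) / betaFn (t/b+1) ((1-t)/b+1) := by
    rw [div_le_div_iff₀ hsb hB, one_mul]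
    exact hLe
  refine le_trans ?_ key
  have hrb : (b:ℝ) ^ (-(1/2):ℝ) = (Real.sqrt b)⁻¹ := by
    rw [Real.rpow_neg hb0.le, ← Real.sqrt_eq_rpow]
  rw [hrb, Real.sqrt_mul Real.pi_pos.le]
  have e : (1/2:ℝ) * (Real.sqrt b)⁻¹ = 1/(2 * Real.sqrt b) := by
    rw [one_div, ← mul_inv, one_div]
  rw [e, div_le_div_iff₀ (by positivity) (by positivity), one_mul, one_mul]
  exact mul_le_mul_of_nonneg_right hsple hsbb.le
end

section
/- Let β > 0, L > 0, m = ⌈β⌉ - 1 if β is not an integer and m = β - 1 if β is an integer (i.e., m is the largest integer strictly less than β), and let Σ(β,L) be the set of probability densities f on [0,1] that are m times differentiable with |f^{(m)}(x) - f^{(m)}(y)| ≤ L|x-y|^{β-m} for all x,y ∈ [0,1]. Then sup_{f ∈ Σ(β,L)} ‖f‖_∞ < ∞. -/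
open MeasureTheory Set

private lemma iterDW_congr_set {f : ℝ → ℝ} {s t : Set ℝ} {x : ℝ}
    (h : s =ᶠ[nhds x] t) (n : ℕ) :
    iteratedDerivWithin n f s x = iteratedDerivWithin n f t x := by
  simp only [iteratedDerivWithin, iteratedFDerivWithin_congr_set h n]

lemma poly_coeff_bound (n : ℕ) :
    ∃ ε > (0:ℝ), ∀ a : Fin (n+1) → ℝ,
      ‖a‖ ≤ ε⁻¹ * ∫ x in (0:ℝ)..1, |∑ j, a j * x ^ (j:ℕ)| := by
  set N : (Fin (n+1) → ℝ) → ℝ := fun a => ∫ x in (0:ℝ)..1, |∑ j, a j * x ^ (j:ℕ)| with hN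
  have hNc : Continuous N := by
    apply intervalIntegral.continuous_parametric_intervalIntegral_of_continuous'
    fun_prop
  obtain ⟨a₀, ha₀, hmin⟩ := (isCompact_sphere (0 : Fin (n+1) → ℝ) 1).exists_isMinOn
    (NormedSpace.sphere_nonempty.mpr zero_le_one) hNc.continuousOn
  have ha₀n : ‖a₀‖ = 1 := by simpa using mem_sphere_iff_norm.mp ha₀
  have ha₀0 : a₀ ≠ 0 := by intro h; rw [h] at ha₀n; simp at ha₀n
  have hpos : 0 < N a₀ := by
    set q : Polynomial ℝ := ∑ j : Fin (n+1), Polynomial.monomial (j : ℕ) (a₀ j) with hq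
    have hqev : ∀ x : ℝ, q.eval x = ∑ j, a₀ j * x ^ (j:ℕ) := by
      intro x; rw [hq, Polynomial.eval_finset_sum]; simp [Polynomial.eval_monomial]
    have hq0 : q ≠ 0 := by
      obtain ⟨j, hj⟩ := Function.ne_iff.mp ha₀0
      intro h
      apply hj
      have hc : q.coeff (j : ℕ) = a₀ j := by
        rw [hq, Polynomial.finset_sum_coeff, Finset.sum_eq_single j]
        · simp
        · intro i _ hij
          rw [Polynomial.coeff_monomial, if_neg (fun h' => hij (Fin.val_injective h'))]
        · simp
      rw [h] at hc; simpa using hc.symm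
    have hroots : Set.Finite {x : ℝ | q.IsRoot x} := Polynomial.finite_setOf_isRoot hq0
    have key : (0:ℝ) < ∫ x in Ioc (0:ℝ) 1, |∑ j, a₀ j * x ^ (j:ℕ)| := by
      rw [MeasureTheory.setIntegral_pos_iff_support_of_nonneg_ae
        (Filter.Eventually.of_forall fun x => abs_nonneg _)
        (((continuous_abs.comp (by fun_prop)).integrableOn_Ioc))]
      have hsub : Ioc (0:ℝ) 1 \ {x : ℝ | q.IsRoot x} ⊆
          (Function.support fun x => |∑ j, a₀ j * x ^ (j:ℕ)|) ∩ Ioc 0 1 := by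
        intro x hx
        refine ⟨?_, hx.1⟩
        simp only [Function.mem_support, abs_ne_zero, ← hqev]
        exact hx.2
      calc (0:ENNReal) < 1 := by norm_num
        _ = volume (Ioc (0:ℝ) 1 \ {x : ℝ | q.IsRoot x}) := by
            rw [measure_diff_null (hroots.measure_zero _)]; simp
        _ ≤ _ := measure_mono hsub
    rw [hN]; simpa [intervalIntegral.integral_of_le (zero_le_one' ℝ)] using key
  refine ⟨N a₀, hpos, fun a => ?_⟩
  rcases eq_or_ne a 0 with rfl | ha
  · simp [hN]
  · have hc : 0 < ‖a‖ := norm_pos_iff.mpr ha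
    have hb : (‖a‖⁻¹ • a) ∈ Metric.sphere (0 : Fin (n+1) → ℝ) 1 := by
      simp [norm_smul, abs_of_pos (inv_pos.mpr hc), inv_mul_cancel₀ hc.ne']
    have hmb : N a₀ ≤ N (‖a‖⁻¹ • a) := hmin hb
    have hNb : N (‖a‖⁻¹ • a) = ‖a‖⁻¹ * N a := by
      rw [hN]
      simp only
      rw [← intervalIntegral.integral_const_mul]
      apply intervalIntegral.integral_congr
      intro x _
      simp only [Pi.smul_apply, smul_eq_mul, mul_assoc]
      rw [← Finset.mul_sum, abs_mul, abs_of_pos (inv_pos.mpr hc)]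
    rw [hNb] at hmb
    rw [le_inv_mul_iff₀ hpos]
    rw [le_inv_mul_iff₀ hc] at hmb
    nlinarith

lemma taylor_decomp (m : ℕ) (f : ℝ → ℝ) (L : ℝ) (hL : 0 ≤ L)
    (hfc : ContDiffOn ℝ m f (Icc 0 1))
    (hH : ∀ u ∈ Icc (0:ℝ) 1, ∀ v ∈ Icc (0:ℝ) 1,
      |iteratedDerivWithin m f (Icc 0 1) u - iteratedDerivWithin m f (Icc 0 1) v| ≤ L) :
    ∀ y ∈ Icc (0:ℝ) 1,
      |f y - ∑ j : Fin (m+1),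
        (iteratedDerivWithin (j:ℕ) f (Icc 0 1) 0 / Nat.factorial (j:ℕ)) * y ^ (j:ℕ)| ≤ L := by
  intro y hy
  rcases m with _ | n
  · simpa [Fin.sum_univ_one, iteratedDerivWithin_zero] using hH y hy 0 ⟨le_rfl, zero_le_one⟩
  · rcases eq_or_lt_of_le hy.1 with h0 | h0
    · rw [← h0]
      rw [Finset.sum_eq_single (0 : Fin (n+2))]
      · simpa [iteratedDerivWithin_zero] using hL
      · intro i _ hi
        have hiv : (i:ℕ) ≠ 0 := Fin.val_ne_zero_iff.mpr hi
        simp [zero_pow hiv]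
      · simp
    · have hsub : Icc (0:ℝ) y ⊆ Icc 0 1 := Icc_subset_Icc le_rfl hy.2
      have hcx : ContDiffOn ℝ (n+1 : ℕ) f (Icc 0 y) := hfc.mono hsub
      have hcn : ContDiffOn ℝ n f (Icc 0 y) := hcx.of_le (by exact_mod_cast Nat.le_succ n)
      have hdn : DifferentiableOn ℝ (iteratedDerivWithin n f (Icc 0 y)) (Ioo 0 y) :=
        (hcx.differentiableOn_iteratedDerivWithin (by exact_mod_cast Nat.lt_succ_self n)
          (uniqueDiffOn_Icc h0)).mono Ioo_subset_Icc_self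
      have hT0 := taylor_mean_remainder_lagrange (x₀ := 0) (x := y) h0.ne
        (by rwa [uIcc_of_le h0.le]) (by rwa [uIcc_of_le h0.le, uIoo_of_le h0.le])
      rw [uIcc_of_le h0.le, uIoo_of_le h0.le] at hT0
      obtain ⟨ξ, hξ, hT⟩ := hT0
      have hcongr : ∀ t : ℝ, t < y → ∀ k : ℕ,
          iteratedDerivWithin k f (Icc 0 y) t = iteratedDerivWithin k f (Icc 0 1) t := by
        intro t ht k
        apply iterDW_congr_set
        rw [Filter.eventuallyEq_set]
        filter_upwards [Iio_mem_nhds ht] with z hz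
        simp only [mem_Icc]
        constructor
        · rintro ⟨h1, _⟩; exact ⟨h1, by linarith [hy.2, mem_Iio.mp hz]⟩
        · rintro ⟨h1, _⟩; exact ⟨h1, le_of_lt (mem_Iio.mp hz)⟩
      rw [taylor_within_apply] at hT
      have hξ1 : ξ ∈ Icc (0:ℝ) 1 := ⟨hξ.1.le, le_trans hξ.2.le hy.2⟩
      rw [hcongr ξ hξ.2 (n+1)] at hT
      have hsum : (∑ k ∈ Finset.range (n+1),
            ((Nat.factorial k : ℝ)⁻¹ * (y - 0) ^ k) • iteratedDerivWithin k f (Icc 0 y) 0)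
          = ∑ k ∈ Finset.range (n+1),
            (iteratedDerivWithin k f (Icc 0 1) 0 / Nat.factorial k) * y ^ k := by
        apply Finset.sum_congr rfl
        intro k _
        rw [hcongr 0 h0 k]
        simp only [smul_eq_mul, sub_zero]
        ring
      rw [hsum] at hT
      have hgoal : (∑ j : Fin (n+2),
            (iteratedDerivWithin (j:ℕ) f (Icc 0 1) 0 / Nat.factorial (j:ℕ)) * y ^ (j:ℕ))
          = (∑ k ∈ Finset.range (n+1),
              (iteratedDerivWithin k f (Icc 0 1) 0 / Nat.factorial k) * y ^ k)
            + (iteratedDerivWithin (n+1) f (Icc 0 1) 0 / Nat.factorial (n+1)) * y ^ (n+1) := by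
        rw [Fin.sum_univ_eq_sum_range (fun k =>
          (iteratedDerivWithin k f (Icc 0 1) 0 / Nat.factorial k) * y ^ k) (n+2)]
        rw [Finset.sum_range_succ]
      rw [hgoal]
      have heq : f y - ((∑ k ∈ Finset.range (n+1),
              (iteratedDerivWithin k f (Icc 0 1) 0 / Nat.factorial k) * y ^ k)
            + (iteratedDerivWithin (n+1) f (Icc 0 1) 0 / Nat.factorial (n+1)) * y ^ (n+1))
          = (iteratedDerivWithin (n+1) f (Icc 0 1) ξ
              - iteratedDerivWithin (n+1) f (Icc 0 1) 0) * (y ^ (n+1) / Nat.factorial (n+1)) := by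
        have h2 : f y - (∑ k ∈ Finset.range (n+1),
            (iteratedDerivWithin k f (Icc 0 1) 0 / Nat.factorial k) * y ^ k)
            = iteratedDerivWithin (n+1) f (Icc 0 1) ξ * (y - 0) ^ (n+1) / Nat.factorial (n+1) := hT
        rw [sub_zero] at h2
        rw [sub_add_eq_sub_sub, h2]
        ring
      rw [heq, abs_mul]
      have hfac : (1:ℝ) ≤ Nat.factorial (n+1) := by
        exact_mod_cast Nat.one_le_iff_ne_zero.mpr (Nat.factorial_ne_zero _)
      have hyp1 : y ^ (n+1) ≤ 1 := pow_le_one₀ h0.le hy.2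
      have hb2 : |y ^ (n+1) / Nat.factorial (n+1)| ≤ 1 := by
        rw [abs_of_nonneg (by positivity)]
        rw [div_le_one (by positivity)]
        linarith
      calc |iteratedDerivWithin (n+1) f (Icc 0 1) ξ - iteratedDerivWithin (n+1) f (Icc 0 1) 0|
            * |y ^ (n+1) / Nat.factorial (n+1)|
          ≤ L * 1 := mul_le_mul (hH ξ hξ1 0 ⟨le_rfl, zero_le_one⟩) hb2 (abs_nonneg _) hL
        _ = L := mul_one L

lemma holder_combine (m : ℕ) (ε L : ℝ) (hε : 0 < ε) (f : ℝ → ℝ)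
    (a : Fin (m+1) → ℝ)
    (hεb : ‖a‖ ≤ ε⁻¹ * ∫ x in (0:ℝ)..1, |∑ j, a j * x ^ (j:ℕ)|)
    (hf0 : ∀ y ∈ Icc (0:ℝ) 1, 0 ≤ f y) (hf1 : (∫ x in (0:ℝ)..1, f x) = 1)
    (hfcont : ContinuousOn f (Icc 0 1))
    (key : ∀ y ∈ Icc (0:ℝ) 1, |f y - ∑ j : Fin (m+1), a j * y ^ (j:ℕ)| ≤ L) :
    ∀ x ∈ Icc (0:ℝ) 1, |f x| ≤ ((m:ℝ)+1) * (ε⁻¹ * (1 + L)) + L := by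
  intro x hx
  have hfint : IntervalIntegrable f volume 0 1 := by
    apply ContinuousOn.intervalIntegrable
    rwa [uIcc_of_le zero_le_one]
  have hPc : Continuous fun y : ℝ => |∑ j : Fin (m+1), a j * y ^ (j:ℕ)| := by fun_prop
  have habs : ∀ y ∈ Icc (0:ℝ) 1, |∑ j : Fin (m+1), a j * y ^ (j:ℕ)| ≤ f y + L := by
    intro y hy
    have h1 := key y hy
    have h2 := hf0 y hy
    have h3 : |∑ j : Fin (m+1), a j * y ^ (j:ℕ)|
        ≤ |f y| + |f y - ∑ j : Fin (m+1), a j * y ^ (j:ℕ)| := by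
      have := abs_sub_abs_le_abs_sub (∑ j : Fin (m+1), a j * y ^ (j:ℕ)) (f y)
      have h4 : |∑ j : Fin (m+1), a j * y ^ (j:ℕ) - f y|
          = |f y - ∑ j : Fin (m+1), a j * y ^ (j:ℕ)| := abs_sub_comm _ _
      linarith
    rw [abs_of_nonneg h2] at h3
    linarith
  have hPle : (∫ y in (0:ℝ)..1, |∑ j : Fin (m+1), a j * y ^ (j:ℕ)|) ≤ 1 + L := by
    calc (∫ y in (0:ℝ)..1, |∑ j : Fin (m+1), a j * y ^ (j:ℕ)|)
        ≤ ∫ y in (0:ℝ)..1, (f y + L) :=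
          intervalIntegral.integral_mono_on zero_le_one (hPc.intervalIntegrable _ _)
            (hfint.add intervalIntegrable_const) habs
      _ = 1 + L := by
          rw [intervalIntegral.integral_add hfint intervalIntegrable_const, hf1,
            intervalIntegral.integral_const]
          simp
  have hanorm : ‖a‖ ≤ ε⁻¹ * (1 + L) :=
    hεb.trans (mul_le_mul_of_nonneg_left hPle (inv_nonneg.mpr hε.le))
  have hxa : |x| ≤ 1 := by
    rw [abs_le]; exact ⟨by linarith [hx.1], hx.2⟩
  have hPx : |∑ j : Fin (m+1), a j * x ^ (j:ℕ)| ≤ ((m:ℝ)+1) * ‖a‖ := by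
    calc |∑ j : Fin (m+1), a j * x ^ (j:ℕ)|
        ≤ ∑ j : Fin (m+1), |a j * x ^ (j:ℕ)| := Finset.abs_sum_le_sum_abs _ _
      _ ≤ ∑ _j : Fin (m+1), ‖a‖ := by
          apply Finset.sum_le_sum
          intro j _
          rw [abs_mul]
          have h5 : |a j| ≤ ‖a‖ := by
            have := norm_le_pi_norm a j
            simpa [Real.norm_eq_abs] using this
          have h6 : |x ^ (j:ℕ)| ≤ 1 := by
            rw [abs_pow]; exact pow_le_one₀ (abs_nonneg _) hxa
          calc |a j| * |x ^ (j:ℕ)| ≤ ‖a‖ * 1 :=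
              mul_le_mul h5 h6 (abs_nonneg _) (norm_nonneg _)
            _ = ‖a‖ := mul_one _
      _ = ((m:ℝ)+1) * ‖a‖ := by
          rw [Finset.sum_const, Finset.card_univ]
          simp [nsmul_eq_mul]
  have h7 := key x hx
  have h8 : |f x| ≤ |f x - ∑ j : Fin (m+1), a j * x ^ (j:ℕ)|
      + |∑ j : Fin (m+1), a j * x ^ (j:ℕ)| := by
    have := abs_add_le (f x - ∑ j : Fin (m+1), a j * x ^ (j:ℕ))
      (∑ j : Fin (m+1), a j * x ^ (j:ℕ))
    simpa using this
  have h9 : ((m:ℝ)+1) * ‖a‖ ≤ ((m:ℝ)+1) * (ε⁻¹ * (1 + L)) :=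
    mul_le_mul_of_nonneg_left hanorm (by positivity)
  linarith

theorem holder_class_uniformly_bounded (β L : ℝ) (hβ : 0 < β) (hL : 0 < L) :
    ∃ M : ℝ, ∀ f : ℝ → ℝ,
      (∀ x ∈ Icc (0:ℝ) 1, 0 ≤ f x) →
      (∫ x in (0:ℝ)..1, f x) = 1 →
      ContDiffOn ℝ (⌈β⌉₊ - 1 : ℕ) f (Icc 0 1) →
      (∀ x ∈ Icc (0:ℝ) 1, ∀ y ∈ Icc (0:ℝ) 1,
        |iteratedDerivWithin (⌈β⌉₊ - 1) f (Icc 0 1) x -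
            iteratedDerivWithin (⌈β⌉₊ - 1) f (Icc 0 1) y| ≤
          L * |x - y| ^ (β - ((⌈β⌉₊ : ℝ) - 1))) →
      ∀ x ∈ Icc (0:ℝ) 1, |f x| ≤ M := by
  have hα0 : 0 < β - ((⌈β⌉₊:ℝ) - 1) := by
    have h := Nat.ceil_lt_add_one hβ.le (R := ℝ)
    linarith
  obtain ⟨ε, hε, hεb⟩ := poly_coeff_bound (⌈β⌉₊ - 1)
  refine ⟨(((⌈β⌉₊ - 1 : ℕ) : ℝ)+1) * (ε⁻¹ * (1 + L)) + L, ?_⟩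
  intro f hf0 hf1 hfc hfH
  have hH : ∀ u ∈ Icc (0:ℝ) 1, ∀ v ∈ Icc (0:ℝ) 1,
      |iteratedDerivWithin (⌈β⌉₊ - 1) f (Icc 0 1) u -
        iteratedDerivWithin (⌈β⌉₊ - 1) f (Icc 0 1) v| ≤ L := by
    intro u hu v hv
    refine (hfH u hu v hv).trans ?_
    have h1 : |u - v| ≤ 1 := by
      rw [abs_le]; exact ⟨by linarith [hu.1, hv.2], by linarith [hu.2, hv.1]⟩
    calc L * |u - v| ^ (β - ((⌈β⌉₊:ℝ) - 1)) ≤ L * 1 :=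
          mul_le_mul_of_nonneg_left (Real.rpow_le_one (abs_nonneg _) h1 hα0.le) hL.le
      _ = L := mul_one L
  have key := taylor_decomp (⌈β⌉₊ - 1) f L hL.le hfc hH
  exact holder_combine (⌈β⌉₊ - 1) ε L hε f
    (fun j => iteratedDerivWithin (j:ℕ) f (Icc 0 1) 0 / Nat.factorial (j:ℕ))
    (hεb _) hf0 hf1 hfc.continuousOn key
end

section
/- Let 0 < β ≤ 2, L > 0. There exists a constant C > 0 such that for every density f in the Hölder class Σ(β,L) on [0,1], every b ∈ (0,1), and every t ∈ [0,1]: |E(f(ξ_{t,b})) - f(t)| ≤ C L b^{β/2}, where ξ_{t,b} has Beta distribution with parameters t/b+1 and (1-t)/b+1. -/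
open MeasureTheory Set

noncomputable def betaMeasure (t b : ℝ) : Measure ℝ :=
  volume.withDensity (fun x => ENNReal.ofReal (Set.indicator (Set.Icc 0 1) (betaKernel t b) x))

open scoped ENNReal NNReal
open Filter

namespace BB

lemma cont_rpow {p : ℝ} (hp : 0 ≤ p) : Continuous fun x : ℝ => x ^ p := by
  rw [continuous_iff_continuousAt]
  exact fun x => Real.continuousAt_rpow_const x p (Or.inr hp)

lemma cont_core {p q : ℝ} (hp : 0 ≤ p) (hq : 0 ≤ q) :
    Continuous fun x : ℝ => x ^ p * (1 - x) ^ q :=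
  (cont_rpow hp).mul ((cont_rpow hq).comp (continuous_const.sub continuous_id))

lemma core_nonneg {p q x : ℝ} (hx : x ∈ Icc (0:ℝ) 1) : 0 ≤ x ^ p * (1 - x) ^ q :=
  mul_nonneg (Real.rpow_nonneg hx.1 _) (Real.rpow_nonneg (by linarith [hx.2]) _)

lemma core_le_one {p q x : ℝ} (hp : 0 ≤ p) (hq : 0 ≤ q) (hx : x ∈ Icc (0:ℝ) 1) :
    x ^ p * (1 - x) ^ q ≤ 1 := by
  have h1 : x ^ p ≤ 1 := Real.rpow_le_one hx.1 hx.2 hp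
  have h2 : (1 - x) ^ q ≤ 1 := Real.rpow_le_one (by linarith [hx.2]) (by linarith [hx.1]) hq
  calc x ^ p * (1 - x) ^ q ≤ 1 * 1 :=
        mul_le_mul h1 h2 (Real.rpow_nonneg (by linarith [hx.2]) _) zero_le_one
    _ = 1 := by ring

lemma II_core {p q : ℝ} (hp : 0 ≤ p) (hq : 0 ≤ q) :
    IntervalIntegrable (fun x : ℝ => x ^ p * (1 - x) ^ q) volume 0 1 :=
  ((cont_core hp hq).continuousOn).intervalIntegrable

lemma betaFn_pos {a c : ℝ} (ha : 1 ≤ a) (hc : 1 ≤ c) : 0 < betaFn a c := by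
  apply intervalIntegral.intervalIntegral_pos_of_pos_on
    (II_core (by linarith) (by linarith))
  · intro x hx
    exact mul_pos (Real.rpow_pos_of_pos hx.1 _) (Real.rpow_pos_of_pos (by linarith [hx.2]) _)
  · norm_num

lemma betaFn_split {a c : ℝ} (ha : 1 ≤ a) (hc : 1 ≤ c) :
    betaFn a c = betaFn (a + 1) c + betaFn a (c + 1) := by
  unfold betaFn
  have h1 : (a + 1 - 1) = a := by ring
  have h2 : (c + 1 - 1) = c := by ring
  rw [h1, h2]
  rw [← intervalIntegral.integral_add (II_core (by linarith) (by linarith))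
      (II_core (by linarith) (by linarith))]
  apply intervalIntegral.integral_congr
  intro x hx
  rw [uIcc_of_le (by norm_num : (0:ℝ) ≤ 1)] at hx
  rcases eq_or_lt_of_le hx.1 with h0 | h0
  · simp only [← h0, Real.one_rpow, sub_zero, Real.zero_rpow (by linarith : a ≠ 0), mul_one,
      zero_mul, zero_add]
  rcases eq_or_lt_of_le hx.2 with h1x | h1x
  · simp only [h1x, Real.one_rpow, sub_self, Real.zero_rpow (by linarith : c ≠ 0), one_mul,
      mul_zero, add_zero]
  · have hx0 : (x:ℝ) ≠ 0 := ne_of_gt h0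
    have hx1 : (1 - x) ≠ 0 := by intro h; rw [sub_eq_zero] at h; exact absurd h1x (by simp [← h])
    have e1 : x ^ a = x ^ (a - 1) * x := by
      rw [← Real.rpow_add_one hx0]; ring_nf
    have e2 : (1 - x) ^ c = (1 - x) ^ (c - 1) * (1 - x) := by
      rw [← Real.rpow_add_one hx1]; ring_nf
    simp only []
    rw [e1, e2]; ring

lemma betaFn_parts {a c : ℝ} (ha : 1 ≤ a) (hc : 1 ≤ c) :
    a * betaFn a (c + 1) = c * betaFn (a + 1) c := by
  have key : ∫ x in (0:ℝ)..1,
      (a * (x ^ (a - 1) * (1 - x) ^ c) - c * (x ^ a * (1 - x) ^ (c - 1))) =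
      (fun x : ℝ => x ^ a * (1 - x) ^ c) 1 - (fun x : ℝ => x ^ a * (1 - x) ^ c) 0 := by
    apply intervalIntegral.integral_eq_sub_of_hasDerivAt
      (f := fun x : ℝ => x ^ a * (1 - x) ^ c)
      (f' := fun x : ℝ => a * (x ^ (a - 1) * (1 - x) ^ c) - c * (x ^ a * (1 - x) ^ (c - 1)))
    · intro x hx
      have d1 : HasDerivAt (fun y : ℝ => y ^ a) (a * x ^ (a - 1)) x :=
        Real.hasDerivAt_rpow_const (Or.inr ha)
      have d2 : HasDerivAt (fun y : ℝ => (1 - y) ^ c) (c * (1 - x) ^ (c - 1) * (-1)) x := by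
        have := (Real.hasDerivAt_rpow_const (x := 1 - x) (p := c) (Or.inr hc)).comp x
          ((hasDerivAt_id x).const_sub 1)
        simpa [Function.comp_def] using this
      have : HasDerivAt (fun y : ℝ => y ^ a * (1 - y) ^ c) _ x := d1.mul d2
      exact this.congr_deriv (by ring)
    · apply IntervalIntegrable.sub
      · exact (II_core (by linarith) (by linarith)).const_mul a
      · exact (II_core (by linarith) (by linarith)).const_mul c
  rw [intervalIntegral.integral_sub ((II_core (by linarith) (by linarith)).const_mul a)
      ((II_core (by linarith) (by linarith)).const_mul c)] at key
  norm_num [Real.zero_rpow (show a ≠ 0 by linarith), Real.zero_rpow (show c ≠ 0 by linarith),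
    Real.one_rpow] at key
  unfold betaFn
  have h1 : (a + 1 - 1) = a := by ring
  have h2 : (c + 1 - 1) = c := by ring
  rw [h1, h2]
  linarith [key]

lemma betaFn_rec {a c : ℝ} (ha : 1 ≤ a) (hc : 1 ≤ c) :
    betaFn (a + 1) c = a / (a + c) * betaFn a c := by
  have h1 := betaFn_split ha hc
  have h2 := betaFn_parts ha hc
  have ha0 : a ≠ 0 := by linarith
  have hac : a + c ≠ 0 := by linarith
  field_simp
  nlinarith [h1, h2]

lemma moment_one {p q : ℝ} (hp : 0 ≤ p) (hq : 0 ≤ q) :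
    ∫ x in (0:ℝ)..1, x * (x ^ p * (1 - x) ^ q) = betaFn (p + 2) (q + 1) := by
  unfold betaFn
  apply intervalIntegral.integral_congr
  intro x hx
  rw [uIcc_of_le (by norm_num : (0:ℝ) ≤ 1)] at hx
  have hq1 : q + 1 - 1 = q := by ring
  simp only []
  rw [hq1]
  rcases eq_or_lt_of_le hx.1 with h0 | h0
  · rw [← h0, Real.zero_rpow (by linarith : p + 2 - 1 ≠ 0)]; ring
  · have hx0 : x ≠ 0 := ne_of_gt h0
    have : x ^ (p + 2 - 1) = x ^ p * x := by
      rw [show p + 2 - 1 = p + 1 by ring, Real.rpow_add_one hx0]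
    rw [this]; ring

lemma moment_two {p q : ℝ} (hp : 0 ≤ p) (hq : 0 ≤ q) :
    ∫ x in (0:ℝ)..1, x ^ (2:ℕ) * (x ^ p * (1 - x) ^ q) = betaFn (p + 3) (q + 1) := by
  unfold betaFn
  apply intervalIntegral.integral_congr
  intro x hx
  rw [uIcc_of_le (by norm_num : (0:ℝ) ≤ 1)] at hx
  have hq1 : q + 1 - 1 = q := by ring
  simp only []
  rw [hq1]
  rcases eq_or_lt_of_le hx.1 with h0 | h0
  · rw [← h0, Real.zero_rpow (by linarith : p + 3 - 1 ≠ 0)]; ring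
  · have hx0 : x ≠ 0 := ne_of_gt h0
    have : x ^ (p + 3 - 1) = x ^ p * x * x := by
      rw [show p + 3 - 1 = p + 1 + 1 by ring, Real.rpow_add_one hx0, Real.rpow_add_one hx0]
    rw [this]; ring

section
variable {t b : ℝ} (hb : 0 < b) (hb1 : b < 1) (ht0 : 0 ≤ t) (ht1 : t ≤ 1)
include hb ht0 ht1

lemma hp' : 0 ≤ t / b := div_nonneg ht0 hb.le
lemma hq' : 0 ≤ (1 - t) / b := div_nonneg (by linarith) hb.le

lemma kernel_cont : Continuous (betaKernel t b) := by
  unfold betaKernel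
  exact (cont_core (hp' hb ht0 ht1) (hq' hb ht0 ht1)).div_const _

lemma kernel_nonneg : ∀ x ∈ Icc (0:ℝ) 1, 0 ≤ betaKernel t b x := fun x hx => by
  unfold betaKernel
  exact div_nonneg (core_nonneg hx)
    (betaFn_pos (by linarith [hp' hb ht0 ht1]) (by linarith [hq' hb ht0 ht1])).le

lemma integral_betaMeasure (f : ℝ → ℝ) :
    ∫ x, f x ∂(betaMeasure t b) = ∫ x in (0:ℝ)..1, f x * betaKernel t b x := by
  have knn := kernel_nonneg hb ht0 ht1
  have hg : Measurable fun x => (Set.indicator (Set.Icc (0:ℝ) 1) (betaKernel t b) x).toNNReal :=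
    ((kernel_cont hb ht0 ht1).measurable.indicator measurableSet_Icc).real_toNNReal
  unfold betaMeasure
  have h1 : (fun x => ENNReal.ofReal (Set.indicator (Set.Icc (0:ℝ) 1) (betaKernel t b) x))
      = fun x => ((Set.indicator (Set.Icc (0:ℝ) 1) (betaKernel t b) x).toNNReal : ℝ≥0∞) := rfl
  rw [h1, integral_withDensity_eq_integral_smul hg f]
  have h2 : (fun x => (Set.indicator (Set.Icc (0:ℝ) 1) (betaKernel t b) x).toNNReal • f x)
      = Set.indicator (Set.Icc (0:ℝ) 1) (fun x => f x * betaKernel t b x) := by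
    funext x
    by_cases h : x ∈ Icc (0:ℝ) 1
    · rw [Set.indicator_of_mem h, Set.indicator_of_mem h, NNReal.smul_def,
        Real.coe_toNNReal _ (knn x h), smul_eq_mul]
      ring
    · rw [Set.indicator_of_notMem h, Set.indicator_of_notMem h]
      simp
  rw [h2, integral_indicator measurableSet_Icc, integral_Icc_eq_integral_Ioc,
    ← intervalIntegral.integral_of_le zero_le_one]

lemma kernel_norm : ∫ x in (0:ℝ)..1, betaKernel t b x = 1 := by
  unfold betaKernel
  rw [intervalIntegral.integral_div]
  rw [show (∫ x in (0:ℝ)..1, x ^ (t/b) * (1-x) ^ ((1-t)/b))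
      = betaFn (t/b + 1) ((1-t)/b + 1) by unfold betaFn; simp only [add_sub_cancel_right]]
  exact div_self (ne_of_gt (betaFn_pos (by linarith [hp' hb ht0 ht1])
    (by linarith [hq' hb ht0 ht1])))

lemma kernel_m1 : ∫ x in (0:ℝ)..1, x * betaKernel t b x
    = (t/b + 1) / (t/b + (1-t)/b + 2) := by
  have hp := hp' hb ht0 ht1; have hq := hq' hb ht0 ht1
  have hB := betaFn_pos (a := t/b + 1) (c := (1-t)/b + 1) (by linarith) (by linarith)
  have h1 : (fun x => x * betaKernel t b x)
      = fun x => (x * (x ^ (t/b) * (1-x) ^ ((1-t)/b))) / betaFn (t/b + 1) ((1-t)/b + 1) := by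
    funext x; unfold betaKernel; ring
  rw [h1, intervalIntegral.integral_div, moment_one hp hq,
    show t/b + 2 = (t/b + 1) + 1 by ring, betaFn_rec (by linarith) (by linarith)]
  rw [show t/b + 1 + ((1-t)/b + 1) = t/b + (1-t)/b + 2 by ring, mul_div_assoc,
    div_self hB.ne', mul_one]
lemma kernel_m2 : ∫ x in (0:ℝ)..1, x ^ (2:ℕ) * betaKernel t b x
    = (t/b + 2) / (t/b + (1-t)/b + 3) * ((t/b + 1) / (t/b + (1-t)/b + 2)) := by
  have hp := hp' hb ht0 ht1; have hq := hq' hb ht0 ht1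
  have hB := betaFn_pos (a := t/b + 1) (c := (1-t)/b + 1) (by linarith) (by linarith)
  have h1 : (fun x => x ^ (2:ℕ) * betaKernel t b x)
      = fun x => (x ^ (2:ℕ) * (x ^ (t/b) * (1-x) ^ ((1-t)/b))) / betaFn (t/b + 1) ((1-t)/b + 1) := by
    funext x; unfold betaKernel; ring
  rw [h1, intervalIntegral.integral_div, moment_two hp hq,
    show t/b + 3 = (t/b + 1 + 1) + 1 by ring,
    betaFn_rec (by linarith) (by linarith),
    show t/b + 1 + 1 = (t/b + 1) + 1 by ring,
    betaFn_rec (by linarith) (by linarith)]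
  have e1 : t/b + 1 + 1 + ((1-t)/b + 1) = t/b + (1-t)/b + 3 := by ring
  have e2 : t/b + 1 + ((1-t)/b + 1) = t/b + (1-t)/b + 2 := by ring
  rw [e1, e2, show t/b + 1 + 1 = t/b + 2 by ring]
  set B := betaFn (t / b + 1) ((1 - t) / b + 1) with hBdef
  field_simp

end

lemma var_bound {t b : ℝ} (hb : 0 < b) (hb1 : b < 1) (ht0 : 0 ≤ t) (ht1 : t ≤ 1) :
    (t/b + 2) / (t/b + (1-t)/b + 3) * ((t/b + 1) / (t/b + (1-t)/b + 2))
      - 2 * t * ((t/b + 1) / (t/b + (1-t)/b + 2)) + t ^ 2 ≤ 2 * b := by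
  have hb' : b ≠ 0 := hb.ne'
  have e : (t/b + 2) / (t/b + (1-t)/b + 3) * ((t/b + 1) / (t/b + (1-t)/b + 2))
      - 2 * t * ((t/b + 1) / (t/b + (1-t)/b + 2)) + t ^ 2
      = ((t+2*b)*(t+b) - 2*t*(t+b)*(1+3*b) + t^2*(1+3*b)*(1+2*b)) / ((1+3*b)*(1+2*b)) := by
    have h2 : t/b + (1-t)/b + 2 = (1+2*b)/b := by rw [eq_div_iff hb']; field_simp; ring
    have h3 : t/b + (1-t)/b + 3 = (1+3*b)/b := by rw [eq_div_iff hb']; field_simp; ring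
    rw [h2, h3]
    field_simp
  rw [e, div_le_iff₀ (by positivity)]
  nlinarith [mul_nonneg hb.le (sq_nonneg (2*t-1)), mul_nonneg (mul_nonneg hb.le hb.le) (sq_nonneg (2*t-1)), pow_pos hb 3, mul_pos hb hb, mul_nonneg (mul_nonneg hb.le hb.le) (mul_nonneg ht0 (by linarith : (0:ℝ) ≤ 1 - t))]

lemma mean_bound {t b : ℝ} (hb : 0 < b) (hb1 : b < 1) (ht0 : 0 ≤ t) (ht1 : t ≤ 1) :
    |(t/b + 1) / (t/b + (1-t)/b + 2) - t| ≤ b := by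
  have e : (t/b + 1) / (t/b + (1-t)/b + 2) - t = (b*(1-2*t)) / (1+2*b) := by
    have h2 : t/b + (1-t)/b + 2 = (1+2*b)/b := by rw [eq_div_iff hb.ne']; field_simp; ring
    rw [h2]
    field_simp
    ring
  rw [e, abs_le]
  constructor
  · rw [le_div_iff₀ (by positivity)]
    nlinarith [mul_pos hb hb]
  · rw [div_le_iff₀ (by positivity)]
    nlinarith [mul_pos hb hb]

lemma rpow_ptwise {β b u : ℝ} (hβ0 : 0 < β) (hβ2 : β ≤ 2) (hb : 0 < b) :
    |u| ^ β ≤ b ^ (β/2) + u ^ (2:ℕ) * b ^ (β/2 - 1) := by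
  have hs : (0:ℝ) < b ^ ((1:ℝ)/2) := Real.rpow_pos_of_pos hb _
  have hterm2 : 0 ≤ u ^ (2:ℕ) * b ^ (β/2 - 1) :=
    mul_nonneg (sq_nonneg u) (Real.rpow_nonneg hb.le _)
  rcases le_or_gt |u| (b ^ ((1:ℝ)/2)) with h | h
  · have : |u| ^ β ≤ (b ^ ((1:ℝ)/2)) ^ β := Real.rpow_le_rpow (abs_nonneg u) h hβ0.le
    have e : (b ^ ((1:ℝ)/2)) ^ β = b ^ (β/2) := by
      rw [← Real.rpow_mul hb.le]; ring_nf
    linarith [this, e ▸ this]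
  · have hu0 : (0:ℝ) < |u| := lt_trans hs h
    have e1 : |u| ^ β = u ^ (2:ℕ) * |u| ^ (β - 2) := by
      rw [← sq_abs, ← Real.rpow_natCast |u| 2, ← Real.rpow_add hu0]
      norm_num
    have e3 : |u| ^ (β - 2) ≤ (b ^ ((1:ℝ)/2)) ^ (β - 2) :=
      Real.rpow_le_rpow_of_nonpos hs h.le (by linarith)
    have e4 : (b ^ ((1:ℝ)/2)) ^ (β - 2) = b ^ (β/2 - 1) := by
      rw [← Real.rpow_mul hb.le]; ring_nf
    have hbpos : 0 ≤ b ^ (β/2) := Real.rpow_nonneg hb.le _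
    calc |u| ^ β = u ^ (2:ℕ) * |u| ^ (β - 2) := e1
      _ ≤ u ^ (2:ℕ) * b ^ (β/2 - 1) := by
          apply mul_le_mul_of_nonneg_left _ (sq_nonneg u)
          rw [← e4]; exact e3
      _ ≤ b ^ (β/2) + u ^ (2:ℕ) * b ^ (β/2 - 1) := by linarith

lemma holder_continuousOn {f : ℝ → ℝ} {L β : ℝ} (hβ : 0 < β)
    (hH : ∀ x ∈ Icc (0:ℝ) 1, ∀ y ∈ Icc (0:ℝ) 1, |f x - f y| ≤ L * |x - y| ^ β) :
    ContinuousOn f (Icc 0 1) := by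
  intro x₀ hx₀
  have hg : Tendsto (fun x => L * |x - x₀| ^ β) (nhdsWithin x₀ (Icc 0 1)) (nhds 0) := by
    have h1 : Tendsto (fun x : ℝ => |x - x₀|) (nhds x₀) (nhds 0) := by
      have hc : Continuous fun x : ℝ => |x - x₀| := (continuous_id.sub continuous_const).abs
      simpa using hc.tendsto x₀
    have h2 : ContinuousAt (fun y : ℝ => y ^ β) 0 :=
      Real.continuousAt_rpow_const 0 β (Or.inr hβ.le)
    have h3 : Tendsto (fun x : ℝ => |x - x₀| ^ β) (nhds x₀) (nhds 0) := by
      have := h2.tendsto.comp h1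
      simpa [Function.comp_def, Real.zero_rpow hβ.ne'] using this
    simpa using (h3.const_mul L).mono_left nhdsWithin_le_nhds
  have key : Tendsto (fun x => dist (f x) (f x₀)) (nhdsWithin x₀ (Icc 0 1)) (nhds 0) := by
    apply squeeze_zero' (Filter.Eventually.of_forall fun x => dist_nonneg) _ hg
    filter_upwards [self_mem_nhdsWithin] with x hx
    rw [Real.dist_eq]
    exact hH x hx x₀ hx₀
  exact tendsto_iff_dist_tendsto_zero.mpr key

lemma taylor_bound {f : ℝ → ℝ} {L β : ℝ} (hβ1 : 1 < β) (hβ2 : β ≤ 2) (hL0 : 0 ≤ L)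
    (hd : DifferentiableOn ℝ f (Icc 0 1))
    (hH : ∀ x ∈ Icc (0:ℝ) 1, ∀ y ∈ Icc (0:ℝ) 1,
      |derivWithin f (Icc 0 1) x - derivWithin f (Icc 0 1) y| ≤ L * |x - y| ^ (β - 1))
    {t x : ℝ} (ht : t ∈ Icc (0:ℝ) 1) (hx : x ∈ Icc (0:ℝ) 1) :
    |f x - f t - derivWithin f (Icc 0 1) t * (x - t)| ≤ L * |x - t| ^ β := by
  set g' := derivWithin f (Icc (0:ℝ) 1) with hg'
  rcases eq_or_ne x t with rfl | hne
  · simp [Real.zero_rpow (by positivity : β ≠ 0)]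
  have hMVT : ∃ ξ, ξ ∈ Icc (0:ℝ) 1 ∧ |ξ - t| ≤ |x - t| ∧ f x - f t = g' ξ * (x - t) := by
    have hderiv : ∀ y ∈ Ioo (0:ℝ) 1, HasDerivAt f (g' y) y := by
      intro y hy
      have hyI : y ∈ Icc (0:ℝ) 1 := Ioo_subset_Icc_self hy
      exact ((hd y hyI).hasDerivWithinAt).hasDerivAt (Icc_mem_nhds hy.1 hy.2)
    rcases lt_or_gt_of_ne hne with hlt | hlt
    · -- x < t
      obtain ⟨ξ, hξ, hslope⟩ := exists_hasDerivAt_eq_slope f g' hlt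
        (hd.continuousOn.mono (Icc_subset_Icc hx.1 ht.2))
        (fun y hy => hderiv y ⟨lt_of_le_of_lt hx.1 hy.1, lt_of_lt_of_le hy.2 ht.2⟩)
      refine ⟨ξ, ⟨by linarith [hξ.1, hx.1], by linarith [hξ.2, ht.2]⟩, ?_, ?_⟩
      · rw [abs_sub_comm ξ t, abs_of_nonneg (by linarith [hξ.2] : 0 ≤ t - ξ),
          abs_sub_comm x t, abs_of_nonneg (by linarith : 0 ≤ t - x)]
        linarith [hξ.1]
      · rw [eq_div_iff (by intro h; rw [sub_eq_zero] at h; exact (ne_of_gt hlt) h)] at hslope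
        linear_combination hslope
    · -- t < x
      obtain ⟨ξ, hξ, hslope⟩ := exists_hasDerivAt_eq_slope f g' hlt
        (hd.continuousOn.mono (Icc_subset_Icc ht.1 hx.2))
        (fun y hy => hderiv y ⟨lt_of_le_of_lt ht.1 hy.1, lt_of_lt_of_le hy.2 hx.2⟩)
      refine ⟨ξ, ⟨by linarith [hξ.1, ht.1], by linarith [hξ.2, hx.2]⟩, ?_, ?_⟩
      · rw [abs_of_nonneg (by linarith [hξ.1] : 0 ≤ ξ - t),
          abs_of_nonneg (by linarith : 0 ≤ x - t)]
        linarith [hξ.2]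
      · rw [eq_div_iff (by intro h; rw [sub_eq_zero] at h; exact (ne_of_gt hlt) h)] at hslope
        linear_combination -hslope
  obtain ⟨ξ, hξI, hξle, hfe⟩ := hMVT
  have e1 : f x - f t - g' t * (x - t) = (g' ξ - g' t) * (x - t) := by rw [hfe]; ring
  rw [e1, abs_mul]
  have h2 : |g' ξ - g' t| ≤ L * |x - t| ^ (β - 1) := by
    calc |g' ξ - g' t| ≤ L * |ξ - t| ^ (β - 1) := hH ξ hξI t ht
      _ ≤ L * |x - t| ^ (β - 1) :=
        mul_le_mul_of_nonneg_left (Real.rpow_le_rpow (abs_nonneg _) hξle (by linarith)) hL0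
  calc |g' ξ - g' t| * |x - t| ≤ L * |x - t| ^ (β - 1) * |x - t| :=
        mul_le_mul_of_nonneg_right h2 (abs_nonneg _)
    _ = L * |x - t| ^ β := by
        rw [mul_assoc, ← Real.rpow_add_one (by simpa [sub_eq_zero] using hne)]
        ring_nf
lemma abs_le_one_of_Icc {x y : ℝ} (hx : x ∈ Icc (0:ℝ) 1) (hy : y ∈ Icc (0:ℝ) 1) :
    |x - y| ≤ 1 := abs_le.mpr ⟨by linarith [hx.1, hy.2], by linarith [hx.2, hy.1]⟩

lemma deriv_bound {f : ℝ → ℝ} {L β : ℝ} (hβ1 : 1 < β) (hβ2 : β ≤ 2) (hL : 0 < L)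
    (hf0 : ∀ x ∈ Icc (0:ℝ) 1, 0 ≤ f x) (hf1 : (∫ x in (0:ℝ)..1, f x) = 1)
    (hd : DifferentiableOn ℝ f (Icc 0 1))
    (hH : ∀ x ∈ Icc (0:ℝ) 1, ∀ y ∈ Icc (0:ℝ) 1,
      |derivWithin f (Icc 0 1) x - derivWithin f (Icc 0 1) y| ≤ L * |x - y| ^ (β - 1))
    {t : ℝ} (ht : t ∈ Icc (0:ℝ) 1) :
    |derivWithin f (Icc 0 1) t| ≤ 8 + 10 * L := by
  set g' := derivWithin f (Icc (0:ℝ) 1) with hg'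
  have taylorL : ∀ u ∈ Icc (0:ℝ) 1, ∀ v ∈ Icc (0:ℝ) 1,
      |f v - f u - g' u * (v - u)| ≤ L := by
    intro u hu v hv
    calc |f v - f u - g' u * (v - u)| ≤ L * |v - u| ^ β :=
          taylor_bound hβ1 hβ2 hL.le hd hH hu hv
      _ ≤ L * 1 := mul_le_mul_of_nonneg_left
          (Real.rpow_le_one (abs_nonneg _) (abs_le_one_of_Icc hv hu) (by linarith)) hL.le
      _ = L := mul_one L
  have gLip : ∀ u ∈ Icc (0:ℝ) 1, ∀ v ∈ Icc (0:ℝ) 1, |g' u - g' v| ≤ L := by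
    intro u hu v hv
    calc |g' u - g' v| ≤ L * |u - v| ^ (β - 1) := hH u hu v hv
      _ ≤ L * 1 := mul_le_mul_of_nonneg_left
          (Real.rpow_le_one (abs_nonneg _) (abs_le_one_of_Icc hu hv) (by linarith)) hL.le
      _ = L := mul_one L
  have hcont := hd.continuousOn
  have hII : ∀ l u : ℝ, l ∈ Icc (0:ℝ) 1 → u ∈ Icc (0:ℝ) 1 →
      IntervalIntegrable f volume l u := by
    intro l u hl hu
    apply (hcont.mono _).intervalIntegrable
    rw [uIcc_eq_union]
    exact union_subset (Icc_subset_Icc hl.1 hu.2) (Icc_subset_Icc hu.1 hl.2)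
  have ht0 := ht.1; have ht1 := ht.2
  rcases le_or_gt t (1/2) with hhalf | hhalf
  · -- t ≤ 1/2, u = t + 1/2
    obtain ⟨u, hu⟩ : ∃ u : ℝ, u = t + 1/2 := ⟨_, rfl⟩
    have huI : u ∈ Icc (0:ℝ) 1 := ⟨by rw [hu]; linarith, by rw [hu]; linarith⟩
    have step1 : (∫ x in t..u, f x) ≤ 1 := by
      have e : (∫ x in (0:ℝ)..t, f x) + (∫ x in t..u, f x) + (∫ x in u..(1:ℝ), f x)
          = ∫ x in (0:ℝ)..1, f x := by
        rw [intervalIntegral.integral_add_adjacent_intervals (hII 0 t (by norm_num) ht)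
          (hII t u ht huI), intervalIntegral.integral_add_adjacent_intervals
          (hII 0 u (by norm_num) huI) (hII u 1 huI (by norm_num))]
      have n1 : 0 ≤ ∫ x in (0:ℝ)..t, f x :=
        intervalIntegral.integral_nonneg ht0 (fun x hx => hf0 x ⟨hx.1, le_trans hx.2 ht1⟩)
      have n2 : 0 ≤ ∫ x in u..(1:ℝ), f x :=
        intervalIntegral.integral_nonneg huI.2 (fun x hx => hf0 x ⟨le_trans huI.1 hx.1, hx.2⟩)
      rw [hf1] at e
      linarith
    have step2 : (f t - L)/2 + g' t/8 ≤ ∫ x in t..u, f x := by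
      have val : (∫ x in t..u, ((f t - L - g' t * t) + g' t * x))
          = (f t - L)/2 + g' t/8 := by
        rw [intervalIntegral.integral_add (g := fun x => g' t * x) (intervalIntegrable_const)
          ((continuous_const.mul continuous_id').intervalIntegrable _ _),
          intervalIntegral.integral_const, intervalIntegral.integral_const_mul,
          integral_id, smul_eq_mul, hu]
        ring
      have mono := intervalIntegral.integral_mono_on
        (f := fun x : ℝ => (f t - L - g' t * t) + g' t * x) (g := f) (by linarith : t ≤ u)
        ((continuous_const.add (continuous_const.mul continuous_id')).intervalIntegrable _ _)
        (hII t u ht huI) (fun x hx => by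
          have hxI : x ∈ Icc (0:ℝ) 1 := ⟨le_trans ht0 hx.1, le_trans hx.2 huI.2⟩
          have h := (abs_le.mp (taylorL t ht x hxI)).1
          show (f t - L - g' t * t) + g' t * x ≤ f x
          linarith [h, (by ring : g' t * (x - t) = g' t * x - g' t * t)])
      rw [val] at mono
      exact mono
    have step4 : -(g' t)/2 - 3*L/2 ≤ f t := by
      have h4 := taylorL u huI t ht
      have e : t - u = -(1/2) := by rw [hu]; ring
      rw [e] at h4
      have h5 := (abs_le.mp h4).1
      have h6 := (abs_le.mp (gLip u huI t ht)).2
      have h7 := hf0 u huI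
      nlinarith [h5, h6, h7]
    rw [abs_le]
    constructor
    · have h := hf0 t ht
      nlinarith [step1, step2, step4, h]
    · have h := hf0 t ht
      nlinarith [step1, step2, h]
  · -- t > 1/2, u = t - 1/2
    obtain ⟨u, hu⟩ : ∃ u : ℝ, u = t - 1/2 := ⟨_, rfl⟩
    have huI : u ∈ Icc (0:ℝ) 1 := ⟨by rw [hu]; linarith, by rw [hu]; linarith⟩
    have step1 : (∫ x in u..t, f x) ≤ 1 := by
      have e : (∫ x in (0:ℝ)..u, f x) + (∫ x in u..t, f x) + (∫ x in t..(1:ℝ), f x)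
          = ∫ x in (0:ℝ)..1, f x := by
        rw [intervalIntegral.integral_add_adjacent_intervals (hII 0 u (by norm_num) huI)
          (hII u t huI ht), intervalIntegral.integral_add_adjacent_intervals
          (hII 0 t (by norm_num) ht) (hII t 1 ht (by norm_num))]
      have n1 : 0 ≤ ∫ x in (0:ℝ)..u, f x :=
        intervalIntegral.integral_nonneg huI.1 (fun x hx => hf0 x ⟨hx.1, le_trans hx.2 huI.2⟩)
      have n2 : 0 ≤ ∫ x in t..(1:ℝ), f x :=
        intervalIntegral.integral_nonneg ht1 (fun x hx => hf0 x ⟨le_trans ht0 hx.1, hx.2⟩)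
      rw [hf1] at e
      linarith
    have step2 : (f t - L)/2 - g' t/8 ≤ ∫ x in u..t, f x := by
      have val : (∫ x in u..t, ((f t - L - g' t * t) + g' t * x))
          = (f t - L)/2 - g' t/8 := by
        rw [intervalIntegral.integral_add (g := fun x => g' t * x) (intervalIntegrable_const)
          ((continuous_const.mul continuous_id').intervalIntegrable _ _),
          intervalIntegral.integral_const, intervalIntegral.integral_const_mul,
          integral_id, smul_eq_mul, hu]
        ring
      have mono := intervalIntegral.integral_mono_on
        (f := fun x : ℝ => (f t - L - g' t * t) + g' t * x) (g := f) (by linarith : u ≤ t)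
        ((continuous_const.add (continuous_const.mul continuous_id')).intervalIntegrable _ _)
        (hII u t huI ht) (fun x hx => by
          have hxI : x ∈ Icc (0:ℝ) 1 := ⟨le_trans huI.1 hx.1, le_trans hx.2 ht1⟩
          have h := (abs_le.mp (taylorL t ht x hxI)).1
          show (f t - L - g' t * t) + g' t * x ≤ f x
          linarith [h, (by ring : g' t * (x - t) = g' t * x - g' t * t)])
      rw [val] at mono
      exact mono
    have step4 : (g' t)/2 - 3*L/2 ≤ f t := by
      have h4 := taylorL u huI t ht
      have e : t - u = 1/2 := by rw [hu]; ring
      rw [e] at h4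
      have h5 := (abs_le.mp h4).1
      have h6 := (abs_le.mp (gLip u huI t ht)).1
      have h7 := hf0 u huI
      nlinarith [h5, h6, h7]
    rw [abs_le]
    constructor
    · have h := hf0 t ht
      nlinarith [step1, step2, h]
    · have h := hf0 t ht
      nlinarith [step1, step2, step4, h]
lemma IIc {g : ℝ → ℝ} (hg : ContinuousOn g (Icc (0:ℝ) 1)) :
    IntervalIntegrable g volume 0 1 := by
  rw [show Icc (0:ℝ) 1 = uIcc 0 1 from (uIcc_of_le zero_le_one).symm] at hg
  exact hg.intervalIntegrable

lemma kernel_var_le {t b : ℝ} (hb : 0 < b) (hb1 : b < 1) (ht0 : 0 ≤ t) (ht1 : t ≤ 1) :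
    ∫ x in (0:ℝ)..1, (x - t) ^ (2:ℕ) * betaKernel t b x ≤ 2 * b := by
  have kcont := kernel_cont hb ht0 ht1
  have e : (fun x : ℝ => (x - t) ^ (2:ℕ) * betaKernel t b x)
      = fun x : ℝ => (x ^ (2:ℕ) * betaKernel t b x - 2 * t * (x * betaKernel t b x))
        + t ^ (2:ℕ) * betaKernel t b x := by
    funext x; ring
  rw [e, intervalIntegral.integral_add
      (IntervalIntegrable.sub (IIc (g := fun x => x ^ (2:ℕ) * betaKernel t b x) (((continuous_pow 2).mul kcont).continuousOn))
        ((IIc (g := fun x => x * betaKernel t b x) ((continuous_id'.mul kcont).continuousOn)).const_mul _))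
      ((IIc kcont.continuousOn).const_mul _),
    intervalIntegral.integral_sub (IIc (g := fun x => x ^ (2:ℕ) * betaKernel t b x) (((continuous_pow 2).mul kcont).continuousOn))
      ((IIc (g := fun x => x * betaKernel t b x) ((continuous_id'.mul kcont).continuousOn)).const_mul _),
    intervalIntegral.integral_const_mul, intervalIntegral.integral_const_mul,
    kernel_m1 hb ht0 ht1, kernel_m2 hb ht0 ht1, kernel_norm hb ht0 ht1, mul_one]
  have := var_bound hb hb1 ht0 ht1
  linarith [this]

lemma int_abs_bound {t b β L : ℝ} (hb : 0 < b) (hb1 : b < 1) (ht0 : 0 ≤ t) (ht1 : t ≤ 1)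
    (hβ0 : 0 < β) (hβ2 : β ≤ 2) (hL : 0 < L) {h : ℝ → ℝ}
    (hc : ContinuousOn h (Icc (0:ℝ) 1))
    (hptw : ∀ x ∈ Icc (0:ℝ) 1, |h x| ≤ L * |x - t| ^ β) :
    |∫ x in (0:ℝ)..1, h x * betaKernel t b x| ≤ 3 * L * b ^ (β/2) := by
  have kcont := kernel_cont hb ht0 ht1
  have knn := kernel_nonneg hb ht0 ht1
  have II_hk : IntervalIntegrable (fun x => h x * betaKernel t b x) volume 0 1 :=
    IIc (hc.mul kcont.continuousOn)
  have II_abs : IntervalIntegrable (fun x => |h x * betaKernel t b x|) volume 0 1 :=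
    II_hk.abs
  have II_maj : IntervalIntegrable (fun x : ℝ =>
      (L * b ^ (β/2)) * betaKernel t b x
        + (L * b ^ (β/2 - 1)) * ((x - t) ^ (2:ℕ) * betaKernel t b x)) volume 0 1 := by
    apply IntervalIntegrable.add
    · exact (IIc kcont.continuousOn).const_mul _
    · exact (IIc ((((continuous_id'.sub continuous_const).pow 2).mul kcont).continuousOn)).const_mul _
  have step1 : |∫ x in (0:ℝ)..1, h x * betaKernel t b x|
      ≤ ∫ x in (0:ℝ)..1, |h x * betaKernel t b x| :=
    intervalIntegral.abs_integral_le_integral_abs zero_le_one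
  have step2 : (∫ x in (0:ℝ)..1, |h x * betaKernel t b x|)
      ≤ ∫ x in (0:ℝ)..1, ((L * b ^ (β/2)) * betaKernel t b x
        + (L * b ^ (β/2 - 1)) * ((x - t) ^ (2:ℕ) * betaKernel t b x)) := by
    apply intervalIntegral.integral_mono_on zero_le_one II_abs II_maj
    intro x hx
    have hk0 := knn x hx
    have e1 : |h x * betaKernel t b x| = |h x| * betaKernel t b x := by
      rw [abs_mul, abs_of_nonneg hk0]
    rw [e1]
    have e2 : |h x| * betaKernel t b x ≤ (L * (b ^ (β/2) + (x - t) ^ (2:ℕ) * b ^ (β/2 - 1)))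
        * betaKernel t b x := by
      apply mul_le_mul_of_nonneg_right _ hk0
      calc |h x| ≤ L * |x - t| ^ β := hptw x hx
        _ ≤ L * (b ^ (β/2) + (x - t) ^ (2:ℕ) * b ^ (β/2 - 1)) :=
          mul_le_mul_of_nonneg_left (rpow_ptwise hβ0 hβ2 hb) hL.le
    calc |h x| * betaKernel t b x
        ≤ (L * (b ^ (β/2) + (x - t) ^ (2:ℕ) * b ^ (β/2 - 1))) * betaKernel t b x := e2
      _ = (L * b ^ (β/2)) * betaKernel t b x
          + (L * b ^ (β/2 - 1)) * ((x - t) ^ (2:ℕ) * betaKernel t b x) := by ring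
  have step3 : (∫ x in (0:ℝ)..1, ((L * b ^ (β/2)) * betaKernel t b x
        + (L * b ^ (β/2 - 1)) * ((x - t) ^ (2:ℕ) * betaKernel t b x)))
      ≤ 3 * L * b ^ (β/2) := by
    rw [intervalIntegral.integral_add ((IIc kcont.continuousOn).const_mul _)
        ((IIc (g := fun x => (x - t) ^ (2:ℕ) * betaKernel t b x) ((((continuous_id'.sub continuous_const).pow 2).mul kcont).continuousOn)).const_mul _),
      intervalIntegral.integral_const_mul, intervalIntegral.integral_const_mul,
      kernel_norm hb ht0 ht1, mul_one]
    have hvar := kernel_var_le hb hb1 ht0 ht1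
    have hpow1 : 0 ≤ L * b ^ (β/2 - 1) := by positivity
    have hbb : b ^ (β/2 - 1) * (2 * b) = 2 * b ^ (β/2) := by
      rw [show β/2 = (β/2 - 1) + 1 by ring, Real.rpow_add hb, Real.rpow_one]
      ring
    have h4 : L * b ^ (β/2 - 1) * (∫ x in (0:ℝ)..1, (x - t) ^ (2:ℕ) * betaKernel t b x)
        ≤ L * (2 * b ^ (β/2)) := by
      calc L * b ^ (β/2 - 1) * (∫ x in (0:ℝ)..1, (x - t) ^ (2:ℕ) * betaKernel t b x)
          ≤ L * b ^ (β/2 - 1) * (2 * b) := mul_le_mul_of_nonneg_left hvar hpow1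
        _ = L * (2 * b ^ (β/2)) := by rw [mul_assoc, hbb]
    linarith [h4]
  calc |∫ x in (0:ℝ)..1, h x * betaKernel t b x|
      ≤ ∫ x in (0:ℝ)..1, |h x * betaKernel t b x| := step1
    _ ≤ _ := step2
    _ ≤ 3 * L * b ^ (β/2) := step3
end BB

theorem bias_bound (β L : ℝ) (hβ0 : 0 < β) (hβ2 : β ≤ 2) (hL : 0 < L) :
    ∃ C > (0:ℝ), ∀ f : ℝ → ℝ,
      (∀ x ∈ Icc (0:ℝ) 1, 0 ≤ f x) →
      (∫ x in (0:ℝ)..1, f x) = 1 →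
      (β ≤ 1 → ∀ x ∈ Icc (0:ℝ) 1, ∀ y ∈ Icc (0:ℝ) 1, |f x - f y| ≤ L * |x - y| ^ β) →
      (1 < β → DifferentiableOn ℝ f (Icc 0 1) ∧
        ∀ x ∈ Icc (0:ℝ) 1, ∀ y ∈ Icc (0:ℝ) 1,
          |derivWithin f (Icc 0 1) x - derivWithin f (Icc 0 1) y| ≤ L * |x - y| ^ (β - 1)) →
      ∀ b ∈ Ioo (0:ℝ) 1, ∀ t ∈ Icc (0:ℝ) 1,
        |(∫ x, f x ∂(betaMeasure t b)) - f t| ≤ C * L * b ^ (β / 2) := by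
  refine ⟨8 / L + 13, by positivity, ?_⟩
  intro f hf0 hf1 hHol hDiff b hbI t htI
  obtain ⟨hb0, hb1⟩ := hbI
  obtain ⟨ht0, ht1⟩ := htI
  have htI' : t ∈ Icc (0:ℝ) 1 := ⟨ht0, ht1⟩
  have fcont : ContinuousOn f (Icc 0 1) := by
    rcases le_or_gt β 1 with h1 | h1
    · exact BB.holder_continuousOn hβ0 (hHol h1)
    · exact (hDiff h1).1.continuousOn
  have hbpow : (0:ℝ) < b ^ (β/2) := Real.rpow_pos_of_pos hb0 _
  have hble : b ≤ b ^ (β/2) := by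
    have := Real.rpow_le_rpow_of_exponent_ge hb0 hb1.le (by linarith : β/2 ≤ 1)
    rwa [Real.rpow_one] at this
  have hCL : (8 / L + 13) * L = 8 + 13 * L := by field_simp
  have kcont := BB.kernel_cont hb0 ht0 ht1
  have knorm := BB.kernel_norm hb0 ht0 ht1
  have e0 : (∫ x, f x ∂(betaMeasure t b)) - f t
      = ∫ x in (0:ℝ)..1, (f x - f t) * betaKernel t b x := by
    rw [BB.integral_betaMeasure hb0 ht0 ht1 f]
    have e1 : ∫ x in (0:ℝ)..1, (f x - f t) * betaKernel t b x
        = (∫ x in (0:ℝ)..1, f x * betaKernel t b x)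
          - ∫ x in (0:ℝ)..1, f t * betaKernel t b x := by
      rw [← intervalIntegral.integral_sub (BB.IIc (g := fun x => f x * betaKernel t b x) (fcont.mul kcont.continuousOn))
        (BB.IIc (g := fun x => f t * betaKernel t b x) (continuousOn_const.mul kcont.continuousOn))]
      apply intervalIntegral.integral_congr
      intro x _
      ring
    rw [e1, intervalIntegral.integral_const_mul, knorm, mul_one]
  rw [e0]
  rcases le_or_gt β 1 with hle1 | hgt1
  · -- Hölder case
    have hH := hHol hle1
    have hptw : ∀ x ∈ Icc (0:ℝ) 1, |f x - f t| ≤ L * |x - t| ^ β :=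
      fun x hx => hH x hx t htI'
    have hmain := BB.int_abs_bound hb0 hb1 ht0 ht1 hβ0 hβ2 hL
      (fcont.sub continuousOn_const) hptw
    calc |∫ x in (0:ℝ)..1, (f x - f t) * betaKernel t b x|
        ≤ 3 * L * b ^ (β/2) := hmain
      _ ≤ (8 / L + 13) * L * b ^ (β/2) := by
          rw [hCL]
          apply mul_le_mul_of_nonneg_right _ hbpow.le
          linarith
  · -- smooth case
    obtain ⟨hdif, hH⟩ := hDiff hgt1
    have hder := BB.deriv_bound hgt1 hβ2 hL hf0 hf1 hdif hH htI'
    have htay : ∀ x ∈ Icc (0:ℝ) 1,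
        |f x - f t - derivWithin f (Icc (0:ℝ) 1) t * (x - t)| ≤ L * |x - t| ^ β :=
      fun x hx => BB.taylor_bound hgt1 hβ2 hL.le hdif hH htI' hx
    set c₁ := derivWithin f (Icc (0:ℝ) 1) t with hc₁
    have e1 : (fun x => (f x - f t) * betaKernel t b x)
        = fun x => (c₁ * (x * betaKernel t b x) - (c₁ * t) * betaKernel t b x)
            + (f x - f t - c₁ * (x - t)) * betaKernel t b x := by
      funext x; ring
    have hRcont : ContinuousOn (fun x => f x - f t - c₁ * (x - t)) (Icc (0:ℝ) 1) :=
      (fcont.sub continuousOn_const).sub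
        (continuousOn_const.mul ((continuousOn_id.sub continuousOn_const)))
    have IIA : IntervalIntegrable
        (fun x => c₁ * (x * betaKernel t b x) - (c₁ * t) * betaKernel t b x) volume 0 1 :=
      ((BB.IIc ((continuous_id'.mul kcont).continuousOn)).const_mul _).sub
        ((BB.IIc kcont.continuousOn).const_mul _)
    have IIB : IntervalIntegrable
        (fun x => (f x - f t - c₁ * (x - t)) * betaKernel t b x) volume 0 1 :=
      BB.IIc (hRcont.mul kcont.continuousOn)
    rw [e1, intervalIntegral.integral_add IIA IIB,
      intervalIntegral.integral_sub
        ((BB.IIc (g := fun x => x * betaKernel t b x) ((continuous_id'.mul kcont).continuousOn)).const_mul _)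
        ((BB.IIc kcont.continuousOn).const_mul _),
      intervalIntegral.integral_const_mul, intervalIntegral.integral_const_mul,
      BB.kernel_m1 hb0 ht0 ht1, knorm, mul_one]
    have hR := BB.int_abs_bound hb0 hb1 ht0 ht1 hβ0 hβ2 hL hRcont htay
    have hMt := BB.mean_bound hb0 hb1 ht0 ht1
    have habs1 : |c₁ * ((t/b + 1) / (t/b + (1-t)/b + 2)) - c₁ * t
        + ∫ x in (0:ℝ)..1, (f x - f t - c₁ * (x - t)) * betaKernel t b x|
        ≤ |c₁| * |(t/b + 1) / (t/b + (1-t)/b + 2) - t|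
          + |∫ x in (0:ℝ)..1, (f x - f t - c₁ * (x - t)) * betaKernel t b x| := by
      calc |c₁ * ((t/b + 1) / (t/b + (1-t)/b + 2)) - c₁ * t
          + ∫ x in (0:ℝ)..1, (f x - f t - c₁ * (x - t)) * betaKernel t b x|
          ≤ |c₁ * ((t/b + 1) / (t/b + (1-t)/b + 2)) - c₁ * t|
            + |∫ x in (0:ℝ)..1, (f x - f t - c₁ * (x - t)) * betaKernel t b x| :=
            abs_add_le _ _
        _ = |c₁| * |(t/b + 1) / (t/b + (1-t)/b + 2) - t|
            + |∫ x in (0:ℝ)..1, (f x - f t - c₁ * (x - t)) * betaKernel t b x| := by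
            rw [show c₁ * ((t/b + 1) / (t/b + (1-t)/b + 2)) - c₁ * t
              = c₁ * ((t/b + 1) / (t/b + (1-t)/b + 2) - t) by ring, abs_mul]
    have hterm1 : |c₁| * |(t/b + 1) / (t/b + (1-t)/b + 2) - t| ≤ (8 + 10 * L) * b :=
      mul_le_mul hder hMt (abs_nonneg _) (by linarith)
    calc |c₁ * ((t/b + 1) / (t/b + (1-t)/b + 2)) - c₁ * t
        + ∫ x in (0:ℝ)..1, (f x - f t - c₁ * (x - t)) * betaKernel t b x|
        ≤ (8 + 10 * L) * b + 3 * L * b ^ (β/2) := by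
          have := le_trans habs1 (add_le_add hterm1 hR)
          exact this
      _ ≤ (8 / L + 13) * L * b ^ (β/2) := by
          rw [hCL]
          have h1 : (8 + 10 * L) * b ≤ (8 + 10 * L) * b ^ (β/2) :=
            mul_le_mul_of_nonneg_left hble (by linarith)
          nlinarith [hbpow]
end
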